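/- Let Φ: ℝ^p ⇉ ℝ^q be a polyhedral sublinear set-valued mapping whose domain dom(Φ) is a linear subspace of ℝ^p. Then the Hoffman constant of Φ is bounded above by the Hoffman constant of its upper adjoint: H(Φ) ≤ H(Φ*). -/

import Mathlib

open Matrix Set

noncomputable section

/-- A norm on `Fin n → ℝ`, given as a function with the norm axioms. -/
structure IsNorm {n : ℕ} (ν : (Fin n → ℝ) → ℝ) : Prop where
  nonneg : ∀ x, 0 ≤ ν x
  eq_zero_iff : ∀ x, ν x = 0 ↔ x = 0
  smul : ∀ (a : ℝ) (x : Fin n → ℝ), ν (a • x) = |a| * ν x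
  triangle : ∀ x y, ν (x + y) ≤ ν x + ν y

/-- The dual norm of `ν`, with respect to the standard dot-product pairing. -/
def dualNorm {n : ℕ} (ν : (Fin n → ℝ) → ℝ) (z : Fin n → ℝ) : ℝ :=
  sSup {r | ∃ x, ν x ≤ 1 ∧ r = z ⬝ᵥ x}

/-- Point-to-set distance induced by the norm `ν`. -/
def distWith {n : ℕ} (ν : (Fin n → ℝ) → ℝ) (x : Fin n → ℝ) (S : Set (Fin n → ℝ)) : ℝ :=
  sInf ((fun s => ν (x - s)) '' S)

/-- The graph of a set-valued mapping. -/
def graphOf {p q : ℕ} (Φ : (Fin p → ℝ) → Set (Fin q → ℝ)) :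
    Set ((Fin p → ℝ) × (Fin q → ℝ)) := {z | z.2 ∈ Φ z.1}

/-- The domain of a set-valued mapping. -/
def domOf {p q : ℕ} (Φ : (Fin p → ℝ) → Set (Fin q → ℝ)) : Set (Fin p → ℝ) :=
  {u | (Φ u).Nonempty}

/-- The image of a set-valued mapping. -/
def imOf {p q : ℕ} (Φ : (Fin p → ℝ) → Set (Fin q → ℝ)) : Set (Fin q → ℝ) :=
  ⋃ u, Φ u

/-- The inverse of a set-valued mapping. -/
def invOf {p q : ℕ} (Φ : (Fin p → ℝ) → Set (Fin q → ℝ)) : (Fin q → ℝ) → Set (Fin p → ℝ) :=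
  fun v => {u | v ∈ Φ u}

/-- A polyhedron: an intersection of finitely many closed half-spaces. -/
def IsPolyhedron {E : Type*} [AddCommGroup E] [Module ℝ E] (S : Set E) : Prop :=
  ∃ (k : ℕ) (f : Fin k → E →ₗ[ℝ] ℝ) (c : Fin k → ℝ), S = {x | ∀ i, f i x ≤ c i}

/-- A set-valued mapping is polyhedral if its graph is a polyhedron. -/
def IsPolyhedralMapping {p q : ℕ} (Φ : (Fin p → ℝ) → Set (Fin q → ℝ)) : Prop :=
  IsPolyhedron (graphOf Φ)

/-- A set-valued mapping is sublinear if its graph is a convex cone containing the origin. -/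
def IsSublinearMapping {p q : ℕ} (Φ : (Fin p → ℝ) → Set (Fin q → ℝ)) : Prop :=
  (0 : Fin q → ℝ) ∈ Φ 0 ∧ Convex ℝ (graphOf Φ) ∧
    ∀ (t : ℝ), 0 ≤ t → ∀ z ∈ graphOf Φ, t • z ∈ graphOf Φ

/-- The Hoffman constant of a set-valued mapping, with respect to the norms `νp, νq`. -/
def hoffmanConst {p q : ℕ} (νp : (Fin p → ℝ) → ℝ) (νq : (Fin q → ℝ) → ℝ)
    (Φ : (Fin p → ℝ) → Set (Fin q → ℝ)) : ℝ :=
  sSup {r | ∃ u v, u ∈ domOf Φ ∧ v ∈ imOf Φ ∧ v ∉ Φ u ∧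
    r = distWith νq v (Φ u) / distWith νp u (invOf Φ v)}

/-- The norm of a sublinear set-valued mapping, with respect to the norms `νp, νq`. -/
def svmNorm {p q : ℕ} (νp : (Fin p → ℝ) → ℝ) (νq : (Fin q → ℝ) → ℝ)
    (Φ : (Fin p → ℝ) → Set (Fin q → ℝ)) : ℝ :=
  sSup {r | ∃ u, u ∈ domOf Φ ∧ νp u ≤ 1 ∧ r = sInf (νq '' Φ u)}

/-- The tangent cone to a set `G` at a point `g ∈ G`. -/
def polyTangentCone {E : Type*} [AddCommGroup E] [Module ℝ E] (G : Set E) (g : E) : Set E :=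
  {d | ∃ t : ℝ, 0 < t ∧ g + t • d ∈ G}

/-- The collection of tangent cones to the graph of `Φ`. -/
def tangentCones {p q : ℕ} (Φ : (Fin p → ℝ) → Set (Fin q → ℝ)) :
    Set (Set ((Fin p → ℝ) × (Fin q → ℝ))) :=
  {T | ∃ u v, v ∈ Φ u ∧ T = polyTangentCone (graphOf Φ) (u, v)}

/-- The set-valued mapping whose graph is `T`. -/
def mapOfGraph {p q : ℕ} (T : Set ((Fin p → ℝ) × (Fin q → ℝ))) :
    (Fin p → ℝ) → Set (Fin q → ℝ) := fun w => {z | (w, z) ∈ T}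

/-- A subset is a linear subspace if it is the underlying set of a submodule. -/
def IsLinearSubspace {E : Type*} [AddCommGroup E] [Module ℝ E] (S : Set E) : Prop :=
  ∃ W : Submodule ℝ E, S = ↑W

/-- The upper adjoint of a sublinear mapping. -/
def upperAdjoint {p q : ℕ} (Φ : (Fin p → ℝ) → Set (Fin q → ℝ)) :
    (Fin q → ℝ) → Set (Fin p → ℝ) :=
  fun w => {z | ∀ u v, v ∈ Φ u → z ⬝ᵥ u ≤ w ⬝ᵥ v}

/-- The solution mapping `b ↦ {x ∈ R : Ax - b ∈ S}`. -/
def solMap {m n : ℕ} (A : Matrix (Fin m) (Fin n) ℝ) (R : Set (Fin n → ℝ))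
    (S : Set (Fin m → ℝ)) : (Fin m → ℝ) → Set (Fin n → ℝ) :=
  fun b => {x | x ∈ R ∧ A *ᵥ x - b ∈ S}

/-- The dual cone `{z : ⟨z,x⟩ ≥ 0 for all x ∈ C}`. -/
def dualConeOf {n : ℕ} (C : Set (Fin n → ℝ)) : Set (Fin n → ℝ) :=
  {z | ∀ x ∈ C, 0 ≤ z ⬝ᵥ x}

/-- A polyhedral cone. -/
def IsPolyhedralCone {n : ℕ} (C : Set (Fin n → ℝ)) : Prop :=
  IsPolyhedron C ∧ (0 : Fin n → ℝ) ∈ C ∧ ∀ (t : ℝ), 0 ≤ t → ∀ x ∈ C, t • x ∈ C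

/-- The dual solution mapping `c ↦ {y ∈ S* : c - Aᵀy ∈ R*}`. -/
def dualSolMap {m n : ℕ} (A : Matrix (Fin m) (Fin n) ℝ) (R : Set (Fin n → ℝ))
    (S : Set (Fin m → ℝ)) : (Fin n → ℝ) → Set (Fin m → ℝ) :=
  fun c => {y | y ∈ dualConeOf S ∧ c - Aᵀ *ᵥ y ∈ dualConeOf R}

/-- The box `{x : ℓ ≤ x ≤ u}`. -/
def boxSet {n : ℕ} (ℓ u : Fin n → ℝ) : Set (Fin n → ℝ) :=
  {x | ∀ i, ℓ i ≤ x i ∧ x i ≤ u i}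

/-- The nonnegative orthant of `ℝ^n`. -/
def nonnegOrthant (n : ℕ) : Set (Fin n → ℝ) := {x | ∀ i, 0 ≤ x i}

/-- The Euclidean norm on `Fin n → ℝ`. -/
def euclNorm {n : ℕ} (x : Fin n → ℝ) : ℝ := Real.sqrt (∑ i, x i ^ 2)

/-- The operator norm induced by the Euclidean norms. -/
def opNorm2 {m n : ℕ} (M : Matrix (Fin m) (Fin n) ℝ) : ℝ :=
  sSup {r | ∃ x, euclNorm x ≤ 1 ∧ r = euclNorm (M *ᵥ x)}

/-- The chi condition measure `χ(A) = sup_{D} ‖(ADAᵀ)⁻¹AD‖₂`. -/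
def chiMeasure {m n : ℕ} (A : Matrix (Fin m) (Fin n) ℝ) : ℝ :=
  sSup {r | ∃ d : Fin n → ℝ, (∀ i, 0 < d i) ∧
    r = opNorm2 ((A * Matrix.diagonal d * Aᵀ)⁻¹ * (A * Matrix.diagonal d))}

/-- The chi-bar condition measure `χ̄(A) = sup_{D} ‖Aᵀ(ADAᵀ)⁻¹AD‖₂`. -/
def chiBarMeasure {m n : ℕ} (A : Matrix (Fin m) (Fin n) ℝ) : ℝ :=
  sSup {r | ∃ d : Fin n → ℝ, (∀ i, 0 < d i) ∧
    r = opNorm2 (Aᵀ * (A * Matrix.diagonal d * Aᵀ)⁻¹ * (A * Matrix.diagonal d))}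

/-- The orthogonal complement (w.r.t. the dot product) of a set. -/
def perpOf {m : ℕ} (L : Set (Fin m → ℝ)) : Set (Fin m → ℝ) :=
  {y | ∀ s ∈ L, y ⬝ᵥ s = 0}

/-- The mapping `P_A : b ↦ {x ≥ 0 : Ax = b}`. -/
def PA {m n : ℕ} (A : Matrix (Fin m) (Fin n) ℝ) : (Fin m → ℝ) → Set (Fin n → ℝ) :=
  fun b => {x | (∀ i, 0 ≤ x i) ∧ A *ᵥ x = b}

/-- The mapping `P_A* : c ↦ {y : Aᵀy ≤ c}`. -/
def PAstar {m n : ℕ} (A : Matrix (Fin m) (Fin n) ℝ) : (Fin n → ℝ) → Set (Fin m → ℝ) :=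
  fun c => {y | ∀ i, (Aᵀ *ᵥ y) i ≤ c i}

/-- Signature vectors: entries equal to `1` or `-1`. -/
def IsSignVector {n : ℕ} (d : Fin n → ℝ) : Prop := ∀ i, d i = 1 ∨ d i = -1

end

section NormBasics

variable {n : ℕ} {ν : (Fin n → ℝ) → ℝ}

theorem IsNorm.zero (h : IsNorm ν) : ν 0 = 0 := (h.eq_zero_iff 0).2 rfl

theorem IsNorm.neg (h : IsNorm ν) (x : Fin n → ℝ) : ν (-x) = ν x := by
  have := h.smul (-1) x
  simpa using this

theorem IsNorm.sub_comm (h : IsNorm ν) (x y : Fin n → ℝ) : ν (x - y) = ν (y - x) := by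
  rw [← h.neg (x - y)]; congr 1; abel

theorem IsNorm.sum_le (h : IsNorm ν) {ι : Type*} (s : Finset ι) (f : ι → (Fin n → ℝ)) :
    ν (∑ i ∈ s, f i) ≤ ∑ i ∈ s, ν (f i) := by
  classical
  induction s using Finset.induction with
  | empty => simp [h.zero]
  | @insert a s' hx ih =>
    rw [Finset.sum_insert hx, Finset.sum_insert hx]
    exact le_trans (h.triangle _ _) (by linarith)

theorem IsNorm.le_mul_norm (h : IsNorm ν) : ∃ C > 0, ∀ x, ν x ≤ C * ‖x‖ := by
  classical
  have hnn : (0:ℝ) ≤ ∑ i : Fin n, ν (fun j => if i = j then 1 else 0) :=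
    Finset.sum_nonneg fun i _ => h.nonneg _
  refine ⟨(∑ i : Fin n, ν (fun j => if i = j then 1 else 0)) + 1, by linarith, fun x => ?_⟩
  have hx : x = ∑ i : Fin n, x i • fun j => if i = j then (1:ℝ) else 0 := pi_eq_sum_univ x
  calc ν x ≤ ∑ i : Fin n, ν (x i • fun j => if i = j then (1:ℝ) else 0) := by
        conv_lhs => rw [hx]
        exact h.sum_le _ _
    _ ≤ ∑ i : Fin n, ‖x‖ * ν (fun j => if i = j then (1:ℝ) else 0) := by
        refine Finset.sum_le_sum fun i _ => ?_
        rw [h.smul]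
        have h1 : |x i| ≤ ‖x‖ := by
          have := norm_le_pi_norm x i; simpa using this
        exact mul_le_mul_of_nonneg_right h1 (h.nonneg _)
    _ = (∑ i : Fin n, ν (fun j => if i = j then (1:ℝ) else 0)) * ‖x‖ := by
        rw [Finset.sum_mul]
        exact Finset.sum_congr rfl fun i _ => mul_comm _ _
    _ ≤ _ := by
        have : (0:ℝ) ≤ ‖x‖ := norm_nonneg x
        nlinarith

theorem IsNorm.abs_sub_le (h : IsNorm ν) (x y : Fin n → ℝ) : |ν x - ν y| ≤ ν (x - y) := by
  rw [abs_le]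
  constructor
  · have := h.triangle (x - y) y
    have h2 : ν ((x - y) + y) = ν x := by congr 1; abel
    have h3 := h.triangle (y - x) x
    have h4 : ν ((y - x) + x) = ν y := by congr 1; abel
    rw [h4] at h3
    rw [h.sub_comm y x] at h3
    linarith
  · have := h.triangle (x - y) y
    have h2 : ν ((x - y) + y) = ν x := by congr 1; abel
    rw [h2] at this
    linarith

theorem IsNorm.continuous (h : IsNorm ν) : Continuous ν := by
  obtain ⟨C, hC, hle⟩ := h.le_mul_norm
  have : LipschitzWith (Real.toNNReal C) ν := by
    apply LipschitzWith.of_dist_le_mul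
    intro x y
    rw [Real.dist_eq, dist_eq_norm]
    calc |ν x - ν y| ≤ ν (x - y) := h.abs_sub_le x y
      _ ≤ C * ‖x - y‖ := hle _
      _ ≤ Real.toNNReal C * ‖x - y‖ := by
          have : (Real.toNNReal C : ℝ) = C := Real.coe_toNNReal C hC.le
          rw [this]
  exact this.continuous

theorem IsNorm.pos (h : IsNorm ν) {x : Fin n → ℝ} (hx : x ≠ 0) : 0 < ν x :=
  lt_of_le_of_ne (h.nonneg x) fun e => hx ((h.eq_zero_iff x).1 e.symm)

theorem IsNorm.norm_le_mul (h : IsNorm ν) : ∃ c > 0, ∀ x, ‖x‖ ≤ c * ν x := by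
  by_cases hn : ∃ x : Fin n → ℝ, x ≠ 0
  · obtain ⟨x₀, hx₀⟩ := hn
    have hsph : (Metric.sphere (0 : Fin n → ℝ) 1).Nonempty := by
      refine ⟨‖x₀‖⁻¹ • x₀, ?_⟩
      simp [norm_smul, norm_ne_zero_iff.2 hx₀, inv_mul_cancel₀]
    obtain ⟨xstar, hmem, hmin⟩ := (isCompact_sphere (0 : Fin n → ℝ) 1).exists_isMinOn hsph
      h.continuous.continuousOn
    have hxs : ν xstar > 0 := by
      apply h.pos
      intro e
      rw [e] at hmem
      simp at hmem
    refine ⟨(ν xstar)⁻¹, by positivity, fun x => ?_⟩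
    by_cases hx : x = 0
    · simp [hx, h.zero]
    · have hnx : ‖x‖ ≠ 0 := norm_ne_zero_iff.2 hx
      have hmem' : ‖x‖⁻¹ • x ∈ Metric.sphere (0 : Fin n → ℝ) 1 := by
        simp [norm_smul, hnx, inv_mul_cancel₀]
      have := hmin hmem'
      simp only [IsMinOn, Set.mem_setOf_eq] at this
      have h2 : ν xstar ≤ ν (‖x‖⁻¹ • x) := this
      rw [h.smul] at h2
      have h3 : |‖x‖⁻¹| = ‖x‖⁻¹ := abs_of_nonneg (by positivity)
      rw [h3] at h2
      have hn0 : 0 < ‖x‖ := lt_of_le_of_ne (norm_nonneg x) (Ne.symm hnx)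
      have h5 : ν xstar * ‖x‖ ≤ ν x := by
        have := mul_le_mul_of_nonneg_left h2 hn0.le
        calc ν xstar * ‖x‖ = ‖x‖ * ν xstar := mul_comm _ _
          _ ≤ ‖x‖ * (‖x‖⁻¹ * ν x) := this
          _ = ν x := by field_simp
      calc ‖x‖ = (ν xstar)⁻¹ * (ν xstar * ‖x‖) := by field_simp
        _ ≤ (ν xstar)⁻¹ * ν x := mul_le_mul_of_nonneg_left h5 (by positivity)
  · push_neg at hn
    refine ⟨1, one_pos, fun x => ?_⟩
    rw [hn x]
    simp [h.zero]


end NormBasics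
section DualDist

variable {n : ℕ} {ν : (Fin n → ℝ) → ℝ}

theorem dual_set_nonempty (ν : (Fin n → ℝ) → ℝ) (hν : IsNorm ν) (z : Fin n → ℝ) :
    (0:ℝ) ∈ {r | ∃ x, ν x ≤ 1 ∧ r = z ⬝ᵥ x} :=
  ⟨0, by rw [hν.zero]; norm_num, by simp⟩

theorem dual_set_bddAbove (hν : IsNorm ν) (z : Fin n → ℝ) :
    BddAbove {r | ∃ x, ν x ≤ 1 ∧ r = z ⬝ᵥ x} := by
  obtain ⟨c, hc, hle⟩ := hν.norm_le_mul
  refine ⟨(∑ i : Fin n, |z i|) * c, fun r hr => ?_⟩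
  obtain ⟨x, hx, rfl⟩ := hr
  calc z ⬝ᵥ x ≤ ∑ i : Fin n, |z i * x i| := by
        unfold dotProduct
        exact Finset.sum_le_sum fun i _ => le_abs_self _
    _ ≤ ∑ i : Fin n, |z i| * ‖x‖ := by
        refine Finset.sum_le_sum fun i _ => ?_
        rw [abs_mul]
        refine mul_le_mul_of_nonneg_left ?_ (abs_nonneg _)
        have := norm_le_pi_norm x i; simpa using this
    _ = (∑ i : Fin n, |z i|) * ‖x‖ := by rw [Finset.sum_mul]
    _ ≤ (∑ i : Fin n, |z i|) * c := by
        refine mul_le_mul_of_nonneg_left ?_ (Finset.sum_nonneg fun i _ => abs_nonneg _)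
        calc ‖x‖ ≤ c * ν x := hle x
          _ ≤ c * 1 := mul_le_mul_of_nonneg_left hx hc.le
          _ = c := mul_one c

theorem le_dualNorm (hν : IsNorm ν) {x : Fin n → ℝ} (z : Fin n → ℝ) (hx : ν x ≤ 1) :
    z ⬝ᵥ x ≤ dualNorm ν z :=
  le_csSup (dual_set_bddAbove hν z) ⟨x, hx, rfl⟩

theorem dualNorm_nonneg (hν : IsNorm ν) (z : Fin n → ℝ) : 0 ≤ dualNorm ν z := by
  have := le_dualNorm hν (x := 0) z (by rw [hν.zero]; norm_num)
  simpa using this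

theorem dualNorm_dot_le (hν : IsNorm ν) (z x : Fin n → ℝ) :
    z ⬝ᵥ x ≤ dualNorm ν z * ν x := by
  by_cases hx : x = 0
  · simp [hx, hν.zero]
  · have hpos := hν.pos hx
    have h1 : ν ((ν x)⁻¹ • x) ≤ 1 := by
      rw [hν.smul, abs_of_nonneg (by positivity)]
      rw [inv_mul_cancel₀ hpos.ne']
    have h2 := le_dualNorm hν z h1
    rw [dotProduct_smul] at h2
    have := mul_le_mul_of_nonneg_left h2 hpos.le
    calc z ⬝ᵥ x = ν x * ((ν x)⁻¹ • (z ⬝ᵥ x)) := by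
          simp [smul_eq_mul]; field_simp
      _ ≤ ν x * dualNorm ν z := this
      _ = dualNorm ν z * ν x := mul_comm _ _

theorem dualNorm_smul_le (hν : IsNorm ν) (a : ℝ) (z : Fin n → ℝ) :
    dualNorm ν (a • z) ≤ |a| * dualNorm ν z := by
  apply Real.sSup_le
  · rintro r ⟨x, hx, rfl⟩
    rcases le_or_gt 0 a with ha | ha
    · rw [smul_dotProduct]
      have := le_dualNorm hν z hx
      calc a • (z ⬝ᵥ x) = a * (z ⬝ᵥ x) := rfl
        _ ≤ a * dualNorm ν z := mul_le_mul_of_nonneg_left this ha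
        _ = |a| * dualNorm ν z := by rw [abs_of_nonneg ha]
    · have hx' : ν (-x) ≤ 1 := by rw [hν.neg]; exact hx
      have := le_dualNorm hν z hx'
      rw [smul_dotProduct]
      have hz : z ⬝ᵥ (-x) = -(z ⬝ᵥ x) := by simp
      rw [hz] at this
      calc a • (z ⬝ᵥ x) = (-a) * (-(z ⬝ᵥ x)) := by ring_nf
        _ ≤ (-a) * dualNorm ν z := mul_le_mul_of_nonneg_left this (by linarith)
        _ = |a| * dualNorm ν z := by rw [abs_of_neg ha]
  · exact mul_nonneg (abs_nonneg a) (dualNorm_nonneg hν z)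

theorem dualNorm_smul (hν : IsNorm ν) (a : ℝ) (z : Fin n → ℝ) :
    dualNorm ν (a • z) = |a| * dualNorm ν z := by
  rcases eq_or_ne a 0 with rfl | ha
  · simp only [zero_smul, abs_zero, zero_mul]
    apply le_antisymm
    · apply Real.sSup_le _ le_rfl
      rintro r ⟨x, hx, rfl⟩; simp
    · exact le_csSup (dual_set_bddAbove hν 0) (dual_set_nonempty ν hν 0)
  · apply le_antisymm (dualNorm_smul_le hν a z)
    have h2 := dualNorm_smul_le hν a⁻¹ (a • z)
    rw [smul_smul, inv_mul_cancel₀ ha, one_smul, abs_inv] at h2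
    have h3 : 0 < |a| := abs_pos.2 ha
    calc |a| * dualNorm ν z ≤ |a| * (|a|⁻¹ * dualNorm ν (a • z)) :=
          mul_le_mul_of_nonneg_left h2 (abs_nonneg a)
      _ = dualNorm ν (a • z) := by field_simp

theorem isNorm_dualNorm (hν : IsNorm ν) : IsNorm (dualNorm ν) := by
  constructor
  · exact dualNorm_nonneg hν
  · intro z
    constructor
    · intro hz
      by_contra hzne
      have hzne' : z ≠ 0 := hzne
      have hpos : 0 < z ⬝ᵥ z := by
        have hex : ∃ i, z i ≠ 0 := by
          by_contra hc; push_neg at hc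
          exact hzne' (funext hc)
        obtain ⟨i, hi⟩ := hex
        exact Finset.sum_pos' (fun j _ => mul_self_nonneg (z j))
          ⟨i, Finset.mem_univ i, mul_self_pos.2 hi⟩
      have hnz := hν.pos hzne'
      have h1 : ν ((ν z)⁻¹ • z) ≤ 1 := by
        rw [hν.smul, abs_of_nonneg (by positivity), inv_mul_cancel₀ hnz.ne']
      have h2 := le_dualNorm hν z h1
      rw [dotProduct_smul, hz] at h2
      have : (0:ℝ) < (ν z)⁻¹ • (z ⬝ᵥ z) := by
        rw [smul_eq_mul]; positivity
      linarith
    · intro hz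
      rw [hz]
      apply le_antisymm
      · apply Real.sSup_le _ le_rfl
        rintro r ⟨x, hx, rfl⟩; simp
      · exact le_csSup (dual_set_bddAbove hν 0) (dual_set_nonempty ν hν 0)
  · exact fun a z => dualNorm_smul hν a z
  · intro x y
    apply Real.sSup_le
    · rintro r ⟨v, hv, rfl⟩
      rw [add_dotProduct]
      exact add_le_add (le_dualNorm hν x hv) (le_dualNorm hν y hv)
    · exact add_nonneg (dualNorm_nonneg hν x) (dualNorm_nonneg hν y)

end DualDist
section DistFacts

variable {n : ℕ} {ν : (Fin n → ℝ) → ℝ}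

theorem distWith_bddBelow (hν : IsNorm ν) (x : Fin n → ℝ) (S : Set (Fin n → ℝ)) :
    BddBelow ((fun s => ν (x - s)) '' S) :=
  ⟨0, fun r hr => by obtain ⟨s, _, rfl⟩ := hr; exact hν.nonneg _⟩

theorem distWith_nonneg (hν : IsNorm ν) (x : Fin n → ℝ) (S : Set (Fin n → ℝ)) :
    0 ≤ distWith ν x S :=
  Real.sInf_nonneg fun r hr => by obtain ⟨s, _, rfl⟩ := hr; exact hν.nonneg _

theorem distWith_le (hν : IsNorm ν) {x s : Fin n → ℝ} {S : Set (Fin n → ℝ)} (hs : s ∈ S) :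
    distWith ν x S ≤ ν (x - s) :=
  csInf_le (distWith_bddBelow hν x S) ⟨s, hs, rfl⟩

theorem le_distWith {x : Fin n → ℝ} {S : Set (Fin n → ℝ)} {c : ℝ} (hS : S.Nonempty)
    (h : ∀ s ∈ S, c ≤ ν (x - s)) : c ≤ distWith ν x S :=
  le_csInf (hS.image _) fun r hr => by obtain ⟨s, hs, rfl⟩ := hr; exact h s hs

theorem distWith_pos (hν : IsNorm ν) {x : Fin n → ℝ} {S : Set (Fin n → ℝ)}
    (hcl : IsClosed S) (hS : S.Nonempty) (hx : x ∉ S) : 0 < distWith ν x S := by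
  obtain ⟨c, hc, hle⟩ := hν.norm_le_mul
  have hopen : IsOpen Sᶜ := hcl.isOpen_compl
  obtain ⟨ε, hε, hball⟩ := Metric.isOpen_iff.1 hopen x hx
  have key : ∀ s ∈ S, ε / c ≤ ν (x - s) := by
    intro s hs
    have hdist : ε ≤ dist x s := by
      by_contra hlt
      push_neg at hlt
      exact (hball (Metric.mem_ball.2 (by rwa [dist_comm] at hlt))) hs
    have h2 : ‖x - s‖ ≤ c * ν (x - s) := hle _
    rw [dist_eq_norm] at hdist
    rw [div_le_iff₀ hc]
    calc ε ≤ ‖x - s‖ := hdist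
      _ ≤ c * ν (x - s) := h2
      _ = ν (x - s) * c := mul_comm _ _
  calc (0:ℝ) < ε / c := by positivity
    _ ≤ distWith ν x S := le_distWith hS key

end DistFacts
section ConeMachinery

open Finset

variable {N : ℕ} {ι : Type*} [Fintype ι]

/-- The linear combination map. -/
def comboMap (g : ι → (Fin N → ℝ)) : (ι → ℝ) →ₗ[ℝ] (Fin N → ℝ) where
  toFun l := ∑ i, l i • g i
  map_add' x y := by
    simp only [Pi.add_apply, add_smul]
    rw [Finset.sum_add_distrib]
  map_smul' a x := by
    simp only [Pi.smul_apply, smul_eq_mul, RingHom.id_apply]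
    rw [Finset.smul_sum]
    congr 1; ext i; rw [smul_smul]

theorem comboMap_apply (g : ι → (Fin N → ℝ)) (l : ι → ℝ) :
    comboMap g l = ∑ i, l i • g i := rfl

/-- Independence of the generators indexed by `s`. -/
def SuppIndep (g : ι → (Fin N → ℝ)) (s : Finset ι) : Prop :=
  ∀ l : ι → ℝ, (∀ i ∉ s, l i = 0) → ∑ i, l i • g i = 0 → ∀ i, l i = 0

/-- The finitely generated cone. -/
def coneOf (g : ι → (Fin N → ℝ)) : Set (Fin N → ℝ) :=
  {x | ∃ l : ι → ℝ, (∀ i, 0 ≤ l i) ∧ x = ∑ i, l i • g i}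

theorem coneOf_zero_mem (g : ι → (Fin N → ℝ)) : (0 : Fin N → ℝ) ∈ coneOf g :=
  ⟨0, fun _ => le_rfl, by simp⟩

theorem coneOf_gen_mem [DecidableEq ι] (g : ι → (Fin N → ℝ)) (i₀ : ι) : g i₀ ∈ coneOf g := by
  refine ⟨fun i => if i = i₀ then 1 else 0, fun i => by by_cases h : i = i₀ <;> simp [h], ?_⟩
  rw [Finset.sum_eq_single i₀]
  · simp
  · intro b _ hb; simp [hb]
  · intro h; exact absurd (Finset.mem_univ i₀) h

theorem coneOf_convex (g : ι → (Fin N → ℝ)) : Convex ℝ (coneOf g) := by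
  rintro x ⟨l, hl, rfl⟩ y ⟨m, hm, rfl⟩ a b ha hb _
  refine ⟨fun i => a * l i + b * m i, fun i => add_nonneg (mul_nonneg ha (hl i)) (mul_nonneg hb (hm i)), ?_⟩
  rw [Finset.smul_sum, Finset.smul_sum, ← Finset.sum_add_distrib]
  congr 1; ext i
  simp only [smul_smul, add_smul]

theorem coneOf_smul (g : ι → (Fin N → ℝ)) (t : ℝ) (ht : 0 ≤ t) {x : Fin N → ℝ}
    (hx : x ∈ coneOf g) : t • x ∈ coneOf g := by
  obtain ⟨l, hl, rfl⟩ := hx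
  refine ⟨fun i => t * l i, fun i => mul_nonneg ht (hl i), ?_⟩
  rw [Finset.smul_sum]
  congr 1; ext i; rw [smul_smul]

theorem cone_caratheodory_aux [DecidableEq ι] (g : ι → (Fin N → ℝ)) :
    ∀ (k : ℕ) (l : ι → ℝ), (∀ i, 0 ≤ l i) →
      ((Finset.univ.filter fun i => l i ≠ 0).card ≤ k) →
      ∃ m : ι → ℝ, (∀ i, 0 ≤ m i) ∧ ∑ i, m i • g i = ∑ i, l i • g i ∧
        SuppIndep g (Finset.univ.filter fun i => m i ≠ 0) := by
  intro k
  induction k with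
  | zero =>
    intro l hl hcard
    have hempty : (Finset.univ.filter fun i => l i ≠ 0) = ∅ := Finset.card_eq_zero.1 (le_antisymm hcard (Nat.zero_le _))
    have hl0 : ∀ i, l i = 0 := by
      intro i
      by_contra hc
      have : i ∈ (Finset.univ.filter fun i => l i ≠ 0) := Finset.mem_filter.2 ⟨Finset.mem_univ i, hc⟩
      rw [hempty] at this
      exact absurd this (Finset.notMem_empty i)
    refine ⟨l, hl, rfl, ?_⟩
    intro l' hsupp _ i
    exact hsupp i (by rw [hempty]; exact Finset.notMem_empty i)
  | succ k ih =>
    intro l hl hcard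
    by_cases hind : SuppIndep g (Finset.univ.filter fun i => l i ≠ 0)
    · exact ⟨l, hl, rfl, hind⟩
    · unfold SuppIndep at hind
      push_neg at hind
      obtain ⟨f, hfsupp, hfzero, i₁, hi₁⟩ := hind
      -- replace f by f or -f so that some entry is positive
      have key : ∀ f' : ι → ℝ, (∀ i ∉ (Finset.univ.filter fun i => l i ≠ 0), f' i = 0) →
          (∑ i, f' i • g i = 0) → (0 < f' i₁) →
          ∃ m : ι → ℝ, (∀ i, 0 ≤ m i) ∧ ∑ i, m i • g i = ∑ i, l i • g i ∧
            SuppIndep g (Finset.univ.filter fun i => m i ≠ 0) := by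
        intro f' hsupp' hzero' hpos'
        set s' := Finset.univ.filter fun i => 0 < f' i with hs'
        have hs'ne : s'.Nonempty := ⟨i₁, Finset.mem_filter.2 ⟨Finset.mem_univ _, hpos'⟩⟩
        obtain ⟨i₀, hi₀mem, hi₀min⟩ := Finset.exists_min_image s' (fun i => l i / f' i) hs'ne
        have hf'i₀ : 0 < f' i₀ := (Finset.mem_filter.1 hi₀mem).2
        set t := l i₀ / f' i₀ with ht
        have htnn : 0 ≤ t := div_nonneg (hl i₀) hf'i₀.le
        set m := fun i => l i - t * f' i with hm
        have hmnn : ∀ i, 0 ≤ m i := by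
          intro i
          by_cases hfi : 0 < f' i
          · have := hi₀min i (Finset.mem_filter.2 ⟨Finset.mem_univ _, hfi⟩)
            have h2 : t * f' i ≤ (l i / f' i) * f' i := by
              apply mul_le_mul_of_nonneg_right this hfi.le
            have h3 : (l i / f' i) * f' i = l i := by field_simp
            simp only [hm]
            rw [h3] at h2
            linarith
          · push_neg at hfi
            have : t * f' i ≤ 0 := mul_nonpos_of_nonneg_of_nonpos htnn hfi
            have := hl i
            simp only [hm]
            linarith
        have hmsum : ∑ i, m i • g i = ∑ i, l i • g i := by
          have : ∑ i, m i • g i = ∑ i, l i • g i - t • ∑ i, f' i • g i := by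
            rw [Finset.smul_sum, ← Finset.sum_sub_distrib]
            congr 1; ext i
            simp only [hm, sub_smul, smul_smul]
          rw [this, hzero', smul_zero, sub_zero]
        have hmsupp : (Finset.univ.filter fun i => m i ≠ 0) ⊆
            (Finset.univ.filter fun i => l i ≠ 0).erase i₀ := by
          intro i hi
          have hmi : m i ≠ 0 := (Finset.mem_filter.1 hi).2
          refine Finset.mem_erase.2 ⟨?_, ?_⟩
          · intro he
            apply hmi
            rw [he]
            simp only [hm, ht]
            field_simp
            ring
          · refine Finset.mem_filter.2 ⟨Finset.mem_univ _, ?_⟩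
            intro hli
            apply hmi
            have hf'i : f' i = 0 := by
              by_contra hc
              have : i ∈ (Finset.univ.filter fun i => l i ≠ 0) := by
                by_contra hnotin
                exact hc (hsupp' i hnotin)
              exact (Finset.mem_filter.1 this).2 hli
            simp only [hm, hf'i, hli, mul_zero, sub_zero]
        have hi₀in : i₀ ∈ (Finset.univ.filter fun i => l i ≠ 0) := by
          by_contra hc
          exact hf'i₀.ne' (hsupp' i₀ hc)
        have hcard' : (Finset.univ.filter fun i => m i ≠ 0).card ≤ k := by
          calc (Finset.univ.filter fun i => m i ≠ 0).card
              ≤ ((Finset.univ.filter fun i => l i ≠ 0).erase i₀).card := Finset.card_le_card hmsupp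
            _ = (Finset.univ.filter fun i => l i ≠ 0).card - 1 := Finset.card_erase_of_mem hi₀in
            _ ≤ k := by omega
        obtain ⟨m', hm'nn, hm'sum, hm'ind⟩ := ih m hmnn hcard'
        exact ⟨m', hm'nn, by rw [hm'sum, hmsum], hm'ind⟩
      rcases lt_or_gt_of_ne hi₁ with hneg | hpos
      · refine key (-f) (fun i hi => by simp [hfsupp i hi]) ?_ (by simpa using hneg)
        have : ∑ i, (-f) i • g i = -∑ i, f i • g i := by
          rw [← Finset.sum_neg_distrib]
          congr 1; ext i; simp [neg_smul]
        rw [this, hfzero, neg_zero]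
      · exact key f hfsupp hfzero hpos

theorem cone_caratheodory [DecidableEq ι] (g : ι → (Fin N → ℝ)) {x : Fin N → ℝ}
    (hx : x ∈ coneOf g) :
    ∃ m : ι → ℝ, (∀ i, 0 ≤ m i) ∧ x = ∑ i, m i • g i ∧
      SuppIndep g (Finset.univ.filter fun i => m i ≠ 0) := by
  obtain ⟨l, hl, rfl⟩ := hx
  obtain ⟨m, h1, h2, h3⟩ := cone_caratheodory_aux g
    ((Finset.univ.filter fun i => l i ≠ 0).card) l hl le_rfl
  exact ⟨m, h1, h2.symm, h3⟩

end ConeMachinery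
section ConeClosed

open Finset

variable {N : ℕ} {ι : Type*} [Fintype ι]

/-- Functions supported on `s`, as a submodule. -/
def suppSubmodule (ι : Type*) [Fintype ι] (s : Finset ι) : Submodule ℝ (ι → ℝ) where
  carrier := {l | ∀ i ∉ s, l i = 0}
  add_mem' := by
    intro a b ha hb i hi
    simp [ha i hi, hb i hi]
  zero_mem' := by intro i _; rfl
  smul_mem' := by
    intro c a ha i hi
    simp [ha i hi]

theorem coneOf_piece_closed [DecidableEq ι] (g : ι → (Fin N → ℝ)) (s : Finset ι)
    (hind : SuppIndep g s) :
    IsClosed {x : Fin N → ℝ | ∃ l : ι → ℝ, (∀ i, 0 ≤ l i) ∧ (∀ i ∉ s, l i = 0) ∧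
      x = ∑ i, l i • g i} := by
  set W := suppSubmodule ι s
  set T := (comboMap g).domRestrict W with hT
  have hinj : LinearMap.ker T = ⊥ := by
    rw [LinearMap.ker_eq_bot']
    intro v hv
    have h0 : ∀ i, (v : ι → ℝ) i = 0 := hind v v.2 hv
    ext i
    exact h0 i
  have hemb := LinearMap.isClosedEmbedding_of_injective hinj
  have hK : IsClosed {v : W | ∀ i, 0 ≤ (v : ι → ℝ) i} := by
    have : {v : W | ∀ i, 0 ≤ (v : ι → ℝ) i} = ⋂ i, {v : W | 0 ≤ (v : ι → ℝ) i} := by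
      ext v; simp
    rw [this]
    refine isClosed_iInter fun i => ?_
    exact isClosed_le continuous_const ((continuous_apply i).comp continuous_subtype_val)
  have himg := hemb.isClosedMap _ hK
  convert himg using 1
  ext x
  constructor
  · rintro ⟨l, hl, hsupp, rfl⟩
    exact ⟨⟨l, hsupp⟩, hl, rfl⟩
  · rintro ⟨⟨l, hsupp⟩, hl, rfl⟩
    exact ⟨l, hl, hsupp, rfl⟩

theorem coneOf_isClosed [DecidableEq ι] (g : ι → (Fin N → ℝ)) : IsClosed (coneOf g) := by
  classical
  have hcover : coneOf g = ⋃ s : Finset ι,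
      (if SuppIndep g s then {x : Fin N → ℝ | ∃ l : ι → ℝ, (∀ i, 0 ≤ l i) ∧
        (∀ i ∉ s, l i = 0) ∧ x = ∑ i, l i • g i} else ∅) := by
    ext x
    constructor
    · intro hx
      obtain ⟨m, hmnn, hmsum, hmind⟩ := cone_caratheodory g hx
      refine Set.mem_iUnion.2 ⟨Finset.univ.filter fun i => m i ≠ 0, ?_⟩
      rw [if_pos hmind]
      refine ⟨m, hmnn, ?_, hmsum⟩
      intro i hi
      by_contra hc
      exact hi (Finset.mem_filter.2 ⟨Finset.mem_univ _, hc⟩)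
    · intro hx
      obtain ⟨s, hs⟩ := Set.mem_iUnion.1 hx
      by_cases hind : SuppIndep g s
      · rw [if_pos hind] at hs
        obtain ⟨l, hl, _, rfl⟩ := hs
        exact ⟨l, hl, rfl⟩
      · rw [if_neg hind] at hs
        exact absurd hs (Set.notMem_empty x)
  rw [hcover]
  refine isClosed_iUnion_of_finite fun s => ?_
  by_cases hind : SuppIndep g s
  · rw [if_pos hind]; exact coneOf_piece_closed g s hind
  · rw [if_neg hind]; exact isClosed_empty

end ConeClosed

section Separation

variable {N : ℕ}

theorem linfunc_eq_dot (f : (Fin N → ℝ) →L[ℝ] ℝ) (y : Fin N → ℝ) :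
    f y = (fun i => f (fun j => if i = j then 1 else 0)) ⬝ᵥ y := by
  classical
  conv_lhs => rw [pi_eq_sum_univ y]
  rw [map_sum]
  unfold dotProduct
  congr 1; ext i
  rw [_root_.map_smul]
  simp [mul_comm]

theorem cone_separation {C : Set (Fin N → ℝ)} (hconv : Convex ℝ C)
    (h0 : (0 : Fin N → ℝ) ∈ C) (hcl : IsClosed C)
    (hcone : ∀ t : ℝ, 0 ≤ t → ∀ x ∈ C, t • x ∈ C) {pt : Fin N → ℝ} (hpt : pt ∉ C) :
    ∃ s : Fin N → ℝ, (∀ y ∈ C, s ⬝ᵥ y ≤ 0) ∧ 0 < s ⬝ᵥ pt := by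
  obtain ⟨f, u, hfu, hupt⟩ := geometric_hahn_banach_closed_point hconv hcl hpt
  have hu0 : 0 < u := by have := hfu 0 h0; simpa using this
  refine ⟨fun i => f (fun j => if i = j then 1 else 0), ?_, ?_⟩
  · intro y hy
    rw [← linfunc_eq_dot]
    by_contra hc
    push_neg at hc
    have hfy : 0 < f y := hc
    have hmem : ((u + 1) / f y) • y ∈ C := hcone _ (by positivity) y hy
    have := hfu _ hmem
    rw [_root_.map_smul] at this
    simp only [smul_eq_mul] at this
    rw [div_mul_cancel₀] at this
    · linarith
    · exact hfy.ne'
  · rw [← linfunc_eq_dot]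
    linarith

end Separation
section Farkas

variable {N : ℕ} {ι : Type*} [Fintype ι]

theorem dot_snoc (s : Fin (N+1) → ℝ) (v : Fin N → ℝ) (a : ℝ) :
    s ⬝ᵥ Fin.snoc v a = (fun j => s (Fin.castSucc j)) ⬝ᵥ v + s (Fin.last N) * a := by
  unfold dotProduct
  rw [Fin.sum_univ_castSucc]
  congr 1
  · exact Finset.sum_congr rfl fun j _ => by rw [Fin.snoc_castSucc]
  · rw [Fin.snoc_last]

/-- Affine Farkas lemma. -/
theorem farkas [DecidableEq ι] (b : ι → (Fin N → ℝ)) (c : ι → ℝ)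
    (d : Fin N → ℝ) (e : ℝ)
    (hfeas : ∃ y, ∀ i, b i ⬝ᵥ y ≤ c i)
    (himp : ∀ y, (∀ i, b i ⬝ᵥ y ≤ c i) → d ⬝ᵥ y ≤ e) :
    ∃ l : ι → ℝ, (∀ i, 0 ≤ l i) ∧ d = ∑ i, l i • b i ∧ ∑ i, l i * c i ≤ e := by
  classical
  -- generators in ℝ^{N+1}
  set G : Option ι → (Fin (N+1) → ℝ) := fun o =>
    Option.elim o (Fin.snoc 0 1) (fun i => Fin.snoc (b i) (c i)) with hG
  set pt : Fin (N+1) → ℝ := Fin.snoc d e with hpt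
  by_cases hmem : pt ∈ coneOf G
  · obtain ⟨l, hl, hsum⟩ := hmem
    refine ⟨fun i => l (some i), fun i => hl _, ?_, ?_⟩
    · funext j
      have := congrFun hsum (Fin.castSucc j)
      rw [hpt] at this
      simp only [Fin.snoc_castSucc] at this
      rw [this, Finset.sum_apply, Fintype.sum_option]
      simp only [hG, Option.elim]
      rw [Finset.sum_apply]
      simp only [Pi.smul_apply, Fin.snoc_castSucc, smul_eq_mul]
      simp
    · have := congrFun hsum (Fin.last N)
      rw [hpt] at this
      simp only [Fin.snoc_last] at this
      rw [Finset.sum_apply, Fintype.sum_option] at this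
      simp only [hG, Option.elim, Pi.smul_apply, Fin.snoc_last, smul_eq_mul] at this
      have hnn : 0 ≤ l none * 1 := by
        have := hl none; linarith
      calc ∑ i, (fun i => l (some i)) i * c i = ∑ i, l (some i) * c i := rfl
        _ ≤ l none * 1 + ∑ i, l (some i) * c i := by linarith
        _ = e := this.symm
  · obtain ⟨s, hsC, hspt⟩ := cone_separation (coneOf_convex G) (coneOf_zero_mem G)
      (coneOf_isClosed G) (fun t ht x hx => coneOf_smul G t ht hx) hmem
    set ω : Fin N → ℝ := fun j => s (Fin.castSucc j) with hω
    set t₀ : ℝ := s (Fin.last N) with ht₀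
    have hgen : ∀ o, s ⬝ᵥ G o ≤ 0 := fun o => hsC _ (coneOf_gen_mem G o)
    have ht₀le : t₀ ≤ 0 := by
      have := hgen none
      simp only [hG, Option.elim] at this
      rw [dot_snoc] at this
      simpa using this
    have hrows : ∀ i, ω ⬝ᵥ b i + t₀ * c i ≤ 0 := by
      intro i
      have := hgen (some i)
      simp only [hG, Option.elim] at this
      rwa [dot_snoc] at this
    have hptgt : 0 < ω ⬝ᵥ d + t₀ * e := by
      have := hspt
      rw [hpt, dot_snoc] at this
      exact this
    exfalso
    rcases eq_or_lt_of_le ht₀le with ht0 | ht0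
    · -- t₀ = 0
      obtain ⟨y₀, hy₀⟩ := hfeas
      have hωd : 0 < ω ⬝ᵥ d := by rw [ht0] at hptgt; simpa using hptgt
      have hdω : 0 < d ⬝ᵥ ω := by rwa [dotProduct_comm]
      set r : ℝ := (e - d ⬝ᵥ y₀ + 1) / (d ⬝ᵥ ω) with hr
      have hdy₀ : d ⬝ᵥ y₀ ≤ e := himp y₀ hy₀
      have hrpos : 0 < r := by
        apply div_pos; linarith; exact hdω
      have hfeas' : ∀ i, b i ⬝ᵥ (y₀ + r • ω) ≤ c i := by
        intro i
        rw [dotProduct_add, dotProduct_smul]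
        have h1 : b i ⬝ᵥ ω ≤ 0 := by
          have := hrows i
          rw [ht0] at this
          rw [dotProduct_comm]
          simpa using this
        have h2 : r • (b i ⬝ᵥ ω) ≤ 0 := smul_nonpos_of_nonneg_of_nonpos hrpos.le h1
        have := hy₀ i
        simp only [smul_eq_mul] at h2 ⊢
        linarith
      have := himp _ hfeas'
      rw [dotProduct_add, dotProduct_smul] at this
      have hcalc : r • (d ⬝ᵥ ω) = e - d ⬝ᵥ y₀ + 1 := by
        simp only [smul_eq_mul, hr]
        field_simp
      rw [hcalc] at this
      linarith
    · -- t₀ < 0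
      set y' : Fin N → ℝ := (-t₀)⁻¹ • ω with hy'
      have hfeas' : ∀ i, b i ⬝ᵥ y' ≤ c i := by
        intro i
        rw [hy', dotProduct_smul]
        have := hrows i
        have hbω : b i ⬝ᵥ ω ≤ -t₀ * c i := by
          rw [dotProduct_comm]; linarith
        have hpos : 0 < -t₀ := by linarith
        calc (-t₀)⁻¹ • (b i ⬝ᵥ ω) ≤ (-t₀)⁻¹ * (-t₀ * c i) := by
              simp only [smul_eq_mul]
              exact mul_le_mul_of_nonneg_left hbω (by positivity)
          _ = c i := by rw [← mul_assoc, inv_mul_cancel₀ hpos.ne', one_mul]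
      have himp' := himp y' hfeas'
      have hpos : 0 < -t₀ := by linarith
      have : ω ⬝ᵥ d ≤ -t₀ * e := by
        have h2 : d ⬝ᵥ y' ≤ e := himp'
        rw [hy', dotProduct_smul] at h2
        have := mul_le_mul_of_nonneg_left h2 hpos.le
        simp only [smul_eq_mul] at this
        calc ω ⬝ᵥ d = -t₀ * ((-t₀)⁻¹ * (d ⬝ᵥ ω)) := by
              rw [← mul_assoc, mul_inv_cancel₀ hpos.ne', one_mul, dotProduct_comm]
          _ ≤ -t₀ * e := this
      linarith

end Farkas
section Hoffman

open Finset

variable {k : ℕ}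

/-- The identification of `Fin k → ℝ` with Euclidean space. -/
noncomputable def toE {k : ℕ} : (Fin k → ℝ) ≃ₗ[ℝ] EuclideanSpace ℝ (Fin k) :=
  (WithLp.linearEquiv 2 ℝ (Fin k → ℝ)).symm

theorem euclNorm_eq_norm (x : Fin k → ℝ) : euclNorm x = ‖toE x‖ := by
  rw [EuclideanSpace.norm_eq]
  unfold euclNorm
  congr 1
  apply Finset.sum_congr rfl
  intro i _
  rw [Real.norm_eq_abs, sq_abs]
  rfl

theorem inner_toE (x y : Fin k → ℝ) : (inner ℝ (toE x) (toE y) : ℝ) = x ⬝ᵥ y := by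
  rw [PiLp.inner_apply]
  unfold dotProduct
  apply Finset.sum_congr rfl
  intro i _
  rw [RCLike.inner_apply]
  simp only [starRingEnd_apply, star_trivial]
  exact mul_comm _ _

theorem toE_symm_apply (v : EuclideanSpace ℝ (Fin k)) (i : Fin k) :
    toE.symm v i = v i := rfl

theorem isNorm_euclNorm : IsNorm (euclNorm (n := k)) := by
  constructor
  · intro x; rw [euclNorm_eq_norm]; exact norm_nonneg _
  · intro x
    rw [euclNorm_eq_norm, norm_eq_zero]
    constructor
    · intro h
      have := toE.injective (a₁ := x) (a₂ := 0) (by rw [h, _root_.map_zero])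
      exact this
    · intro h; rw [h, _root_.map_zero]
  · intro a x
    rw [euclNorm_eq_norm, euclNorm_eq_norm, _root_.map_smul, norm_smul, Real.norm_eq_abs]
  · intro x y
    rw [euclNorm_eq_norm, euclNorm_eq_norm, euclNorm_eq_norm, _root_.map_add]
    exact norm_add_le _ _

theorem euclNorm_sq (x : Fin k → ℝ) : x ⬝ᵥ x = euclNorm x ^ 2 := by
  rw [euclNorm_eq_norm, ← inner_toE, real_inner_self_eq_norm_sq]

/-- Antilipschitz bound for an injective linear map out of a finite-dimensional space. -/
theorem antilip_of_injective {V : Type*} [NormedAddCommGroup V] [NormedSpace ℝ V]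
    [FiniteDimensional ℝ V] (T : V →ₗ[ℝ] (Fin k → ℝ)) (hinj : LinearMap.ker T = ⊥) :
    ∃ c > 0, ∀ v, ‖v‖ ≤ c * euclNorm (T v) := by
  have hcont : Continuous T := T.continuous_of_finiteDimensional
  have hTne : ∀ v : V, v ≠ 0 → T v ≠ 0 := by
    intro v hv hc
    rw [LinearMap.ker_eq_bot'] at hinj
    exact hv (hinj v hc)
  by_cases hV : ∃ v : V, v ≠ 0
  · obtain ⟨v₀, hv₀⟩ := hV
    have hsph : (Metric.sphere (0 : V) 1).Nonempty := by
      refine ⟨‖v₀‖⁻¹ • v₀, ?_⟩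
      simp [norm_smul, norm_ne_zero_iff.2 hv₀, inv_mul_cancel₀]
    have hconteN : Continuous fun v : V => euclNorm (T v) := by
      have h1 : Continuous (euclNorm (n := k)) := isNorm_euclNorm.continuous
      exact h1.comp hcont
    obtain ⟨vs, hmem, hmin⟩ := (isCompact_sphere (0 : V) 1).exists_isMinOn hsph
      hconteN.continuousOn
    have hvs : vs ≠ 0 := by
      intro h; rw [h] at hmem; simp at hmem
    have hpos : 0 < euclNorm (T vs) := isNorm_euclNorm.pos (hTne vs hvs)
    refine ⟨(euclNorm (T vs))⁻¹, by positivity, fun v => ?_⟩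
    by_cases hv : v = 0
    · simp [hv, isNorm_euclNorm.zero]
    · have hnv : ‖v‖ ≠ 0 := norm_ne_zero_iff.2 hv
      have hn0 : 0 < ‖v‖ := lt_of_le_of_ne (norm_nonneg v) (Ne.symm hnv)
      have hmem' : ‖v‖⁻¹ • v ∈ Metric.sphere (0 : V) 1 := by
        simp [norm_smul, hnv, inv_mul_cancel₀]
      have h2 : euclNorm (T vs) ≤ euclNorm (T (‖v‖⁻¹ • v)) := hmin hmem'
      rw [_root_.map_smul, isNorm_euclNorm.smul, abs_of_nonneg (by positivity)] at h2
      have h5 : euclNorm (T vs) * ‖v‖ ≤ euclNorm (T v) := by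
        have := mul_le_mul_of_nonneg_left h2 hn0.le
        calc euclNorm (T vs) * ‖v‖ = ‖v‖ * euclNorm (T vs) := mul_comm _ _
          _ ≤ ‖v‖ * (‖v‖⁻¹ * euclNorm (T v)) := this
          _ = euclNorm (T v) := by field_simp
      calc ‖v‖ = (euclNorm (T vs))⁻¹ * (euclNorm (T vs) * ‖v‖) := by field_simp
        _ ≤ (euclNorm (T vs))⁻¹ * euclNorm (T v) := mul_le_mul_of_nonneg_left h5 (by positivity)
  · push_neg at hV
    refine ⟨1, one_pos, fun v => ?_⟩
    rw [hV v]
    simp [isNorm_euclNorm.nonneg]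

/-- Coefficient bound for independent subfamilies. -/
theorem supp_coeff_bound {ι : Type*} [Fintype ι] (M : ι → (Fin k → ℝ)) (s : Finset ι)
    (hind : SuppIndep M s) :
    ∃ c > 0, ∀ l : ι → ℝ, (∀ i ∉ s, l i = 0) → ‖l‖ ≤ c * euclNorm (∑ i, l i • M i) := by
  set W := suppSubmodule ι s
  set T := (comboMap M).domRestrict W with hT
  have hker : LinearMap.ker T = ⊥ := by
    rw [LinearMap.ker_eq_bot']
    intro v hv
    have h0 : ∀ i, (v : ι → ℝ) i = 0 := hind v v.2 hv
    ext i
    exact h0 i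
  obtain ⟨c, hc, hb⟩ := antilip_of_injective T hker
  refine ⟨c, hc, fun l hl => ?_⟩
  have := hb ⟨l, hl⟩
  simpa [hT, comboMap_apply] using this

/-- Classical Hoffman lemma for systems of linear inequalities (Euclidean norm). -/
theorem hoffman_lemma {ι : Type*} [Fintype ι] (M : ι → (Fin k → ℝ)) :
    ∃ K > 0, ∀ (b : ι → ℝ) (x₀ : Fin k → ℝ) (ε : ℝ), 0 ≤ ε →
      (∃ y, ∀ i, M i ⬝ᵥ y ≤ b i) → (∀ i, M i ⬝ᵥ x₀ ≤ b i + ε) →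
      ∃ y, (∀ i, M i ⬝ᵥ y ≤ b i) ∧ euclNorm (x₀ - y) ≤ K * ε := by
  classical
  -- uniform coefficient-bound constant
  have hc : ∀ s : Finset ι, ∃ c > 0, SuppIndep M s →
      ∀ l : ι → ℝ, (∀ i ∉ s, l i = 0) → ‖l‖ ≤ c * euclNorm (∑ i, l i • M i) := by
    intro s
    by_cases hind : SuppIndep M s
    · obtain ⟨c, hc, hb⟩ := supp_coeff_bound M s hind
      exact ⟨c, hc, fun _ => hb⟩
    · exact ⟨1, one_pos, fun h => absurd h hind⟩
  choose cs hcs hcb using hc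
  set Cmax : ℝ := (Finset.univ : Finset (Finset ι)).sup' ⟨∅, Finset.mem_univ ∅⟩ cs with hCmax
  have hCmax_pos : 0 < Cmax := by
    obtain ⟨s, hs, hval⟩ := Finset.exists_mem_eq_sup' (⟨∅, Finset.mem_univ ∅⟩ :
      (Finset.univ : Finset (Finset ι)).Nonempty) cs
    rw [hCmax, hval]
    exact hcs s
  have hCle : ∀ s : Finset ι, cs s ≤ Cmax := fun s =>
    Finset.le_sup' cs (Finset.mem_univ s)
  set K : ℝ := (Fintype.card ι + 1 : ℝ) * Cmax with hK
  refine ⟨K, by positivity, ?_⟩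
  intro b x₀ ε hε hfeas hres
  -- the feasible set, in Euclidean space
  set P : Set (EuclideanSpace ℝ (Fin k)) := {y | ∀ i, M i ⬝ᵥ (toE.symm y) ≤ b i} with hP
  have hPne : P.Nonempty := by
    obtain ⟨y₀, hy₀⟩ := hfeas
    exact ⟨toE y₀, by simpa [hP] using hy₀⟩
  have hPconv : Convex ℝ P := by
    rintro y hy z hz a b' ha hb' hab
    intro i
    have h1 := hy i
    have h2 := hz i
    have hlin : M i ⬝ᵥ toE.symm (a • y + b' • z)
        = a * (M i ⬝ᵥ toE.symm y) + b' * (M i ⬝ᵥ toE.symm z) := by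
      rw [_root_.map_add, _root_.map_smul, _root_.map_smul, dotProduct_add,
        dotProduct_smul, dotProduct_smul]
      simp [smul_eq_mul]
    rw [hlin]
    calc a * (M i ⬝ᵥ toE.symm y) + b' * (M i ⬝ᵥ toE.symm z)
        ≤ a * b i + b' * b i := by
          apply add_le_add
          · exact mul_le_mul_of_nonneg_left h1 ha
          · exact mul_le_mul_of_nonneg_left h2 hb'
      _ = b i := by rw [← add_mul, hab, one_mul]
  have hPclosed : IsClosed P := by
    have : P = ⋂ i, {y : EuclideanSpace ℝ (Fin k) | M i ⬝ᵥ toE.symm y ≤ b i} := by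
      ext y; simp [hP]
    rw [this]
    refine isClosed_iInter fun i => ?_
    have hcont : Continuous fun y : EuclideanSpace ℝ (Fin k) => M i ⬝ᵥ toE.symm y := by
      have hlin : Continuous (toE.symm : EuclideanSpace ℝ (Fin k) → (Fin k → ℝ)) :=
        toE.symm.toLinearMap.continuous_of_finiteDimensional
      have hdot : Continuous fun v : Fin k → ℝ => M i ⬝ᵥ v := by
        unfold dotProduct
        exact continuous_finset_sum _ fun j _ => continuous_const.mul (continuous_apply j)
      exact hdot.comp hlin
    exact isClosed_le hcont continuous_const
  -- projection
  obtain ⟨xs, hxsP, hproj⟩ := exists_norm_eq_iInf_of_complete_convex hPne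
    (hPclosed.isComplete) hPconv (toE x₀)
  have hvar := (norm_eq_iInf_iff_real_inner_le_zero hPconv hxsP).1 hproj
  set hvec : Fin k → ℝ := x₀ - toE.symm xs with hhvec
  -- active rows
  set A : Finset ι := Finset.univ.filter (fun i => M i ⬝ᵥ toE.symm xs = b i) with hA
  -- any direction feasible for the active rows has nonpositive inner product with hvec
  have hkey : ∀ dvec : Fin k → ℝ, (∀ i ∈ A, M i ⬝ᵥ dvec ≤ 0) → hvec ⬝ᵥ dvec ≤ 0 := by
    intro dvec hd
    -- find positive step size
    have hstep : ∃ t : ℝ, 0 < t ∧ ∀ i ∉ A, t * (M i ⬝ᵥ dvec) ≤ b i - M i ⬝ᵥ toE.symm xs := by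
      by_cases hne : (Finset.univ \ A).Nonempty
      · obtain ⟨i₁, hi₁mem, hi₁min⟩ := Finset.exists_min_image (Finset.univ \ A)
          (fun i => (b i - M i ⬝ᵥ toE.symm xs) / (|M i ⬝ᵥ dvec| + 1)) hne
        have hslack : ∀ i ∉ A, 0 < b i - M i ⬝ᵥ toE.symm xs := by
          intro i hi
          have h1 := hxsP i
          rcases lt_or_eq_of_le h1 with h | h
          · linarith
          · exact absurd (Finset.mem_filter.2 ⟨Finset.mem_univ i, h⟩) hi
        have hi₁notA : i₁ ∉ A := (Finset.mem_sdiff.1 hi₁mem).2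
        refine ⟨(b i₁ - M i₁ ⬝ᵥ toE.symm xs) / (|M i₁ ⬝ᵥ dvec| + 1), ?_, ?_⟩
        · apply div_pos (hslack i₁ hi₁notA)
          positivity
        · intro i hi
          have hmin := hi₁min i (Finset.mem_sdiff.2 ⟨Finset.mem_univ _, hi⟩)
          have h2 : (b i₁ - M i₁ ⬝ᵥ toE.symm xs) / (|M i₁ ⬝ᵥ dvec| + 1)
              ≤ (b i - M i ⬝ᵥ toE.symm xs) / (|M i ⬝ᵥ dvec| + 1) := hmin
          set t := (b i₁ - M i₁ ⬝ᵥ toE.symm xs) / (|M i₁ ⬝ᵥ dvec| + 1) with ht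
          have htpos : 0 < t := by
            apply div_pos (hslack i₁ hi₁notA); positivity
          have h3 : t * (|M i ⬝ᵥ dvec| + 1) ≤ b i - M i ⬝ᵥ toE.symm xs := by
            have hpos' : (0:ℝ) < |M i ⬝ᵥ dvec| + 1 := by positivity
            rw [← le_div_iff₀ hpos']
            exact h2
          calc t * (M i ⬝ᵥ dvec) ≤ t * (|M i ⬝ᵥ dvec| + 1) := by
                apply mul_le_mul_of_nonneg_left _ htpos.le
                have := le_abs_self (M i ⬝ᵥ dvec); linarith
            _ ≤ b i - M i ⬝ᵥ toE.symm xs := h3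
      · refine ⟨1, one_pos, fun i hi => ?_⟩
        exfalso
        exact hne ⟨i, Finset.mem_sdiff.2 ⟨Finset.mem_univ _, hi⟩⟩
    obtain ⟨t, htpos, hstep'⟩ := hstep
    have hwmem : xs + t • toE dvec ∈ P := by
      intro i
      have hlin : M i ⬝ᵥ toE.symm (xs + t • toE dvec)
          = M i ⬝ᵥ toE.symm xs + t * (M i ⬝ᵥ dvec) := by
        rw [_root_.map_add, _root_.map_smul, dotProduct_add, dotProduct_smul]
        simp only [smul_eq_mul, LinearEquiv.symm_apply_apply]
      rw [hlin]
      by_cases hiA : i ∈ A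
      · have h1 : M i ⬝ᵥ toE.symm xs = b i := (Finset.mem_filter.1 hiA).2
        have h2 : M i ⬝ᵥ dvec ≤ 0 := hd i hiA
        nlinarith
      · have := hstep' i hiA
        linarith
    have := hvar _ hwmem
    have heq : (inner ℝ (toE x₀ - xs) (xs + t • toE dvec - xs) : ℝ) = t * (hvec ⬝ᵥ dvec) := by
      have h1 : xs + t • toE dvec - xs = t • toE dvec := by abel
      rw [h1]
      have h2 : toE x₀ - xs = toE hvec := by
        rw [hhvec, _root_.map_sub, toE.apply_symm_apply]
      rw [h2, real_inner_smul_right, inner_toE]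
    rw [heq] at this
    by_contra hcon
    push_neg at hcon
    nlinarith
  -- Farkas on the active rows
  set M' : ι → (Fin k → ℝ) := fun i => if i ∈ A then M i else 0 with hM'
  have himp : ∀ dvec : Fin k → ℝ, (∀ i, M' i ⬝ᵥ dvec ≤ (fun _ : ι => (0:ℝ)) i) →
      hvec ⬝ᵥ dvec ≤ 0 := by
    intro dvec hd
    apply hkey
    intro i hiA
    have := hd i
    rw [hM'] at this
    simpa [if_pos hiA] using this
  obtain ⟨l, hl, hrep, _⟩ := farkas M' (fun _ => (0:ℝ)) hvec 0
    ⟨0, fun i => by simp⟩ himp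
  have hmemcone : hvec ∈ coneOf M' := ⟨l, hl, hrep⟩
  obtain ⟨m, hm, hmrep, hmind⟩ := cone_caratheodory M' hmemcone
  have hsuppA : ∀ i, m i ≠ 0 → i ∈ A := by
    intro i hmi
    by_contra hiA
    have hM'i : M' i = 0 := by rw [hM']; simp [if_neg hiA]
    have hindic : ∀ j ∉ (Finset.univ.filter fun j => m j ≠ 0),
        (fun j' => if j' = i then (1:ℝ) else 0) j = 0 := by
      intro j hj
      by_cases hji : j = i
      · exfalso
        apply hj
        rw [hji]
        exact Finset.mem_filter.2 ⟨Finset.mem_univ _, hmi⟩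
      · simp [hji]
    have hzero : ∑ j, (if j = i then (1:ℝ) else 0) • M' j = 0 := by
      rw [Finset.sum_eq_single i]
      · simp [hM'i]
      · intro b' _ hb'; simp [hb']
      · intro h; exact absurd (Finset.mem_univ i) h
    have := hmind (fun j' => if j' = i then (1:ℝ) else 0) hindic hzero i
    simp at this
  have hrepM : hvec = ∑ i, m i • M i := by
    rw [hmrep]
    apply Finset.sum_congr rfl
    intro i _
    by_cases hmi : m i = 0
    · simp [hmi]
    · rw [hM']; simp [if_pos (hsuppA i hmi)]
  have hindM : SuppIndep M (Finset.univ.filter fun i => m i ≠ 0) := by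
    intro l' hsupp hsum
    apply hmind l' hsupp
    rw [← hsum]
    apply Finset.sum_congr rfl
    intro i _
    by_cases hl'i : l' i = 0
    · simp [hl'i]
    · have hmi : m i ≠ 0 := by
        by_contra hc
        exact hl'i (hsupp i (fun hmem => (Finset.mem_filter.1 hmem).2 hc))
      rw [hM']
      simp [if_pos (hsuppA i hmi)]
  set δ := euclNorm hvec with hδ
  have hδnn : 0 ≤ δ := isNorm_euclNorm.nonneg _
  have hdotsum : ∀ (F : ι → Fin k → ℝ) (v : Fin k → ℝ), (∑ i, F i) ⬝ᵥ v = ∑ i, F i ⬝ᵥ v := by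
    intro F v
    unfold dotProduct
    simp only [Finset.sum_apply, Finset.sum_mul]
    rw [Finset.sum_comm]
  have hsq : δ^2 = ∑ i, m i * (M i ⬝ᵥ hvec) := by
    calc δ^2 = (∑ i, m i • M i) ⬝ᵥ hvec := by
          rw [← hrepM]
          exact (euclNorm_sq hvec).symm
      _ = ∑ i, (m i • M i) ⬝ᵥ hvec := hdotsum _ _
      _ = ∑ i, m i * (M i ⬝ᵥ hvec) := by
          apply Finset.sum_congr rfl
          intro i _
          rw [smul_dotProduct, smul_eq_mul]
  have hterm : ∀ i, m i ≠ 0 → M i ⬝ᵥ hvec ≤ ε := by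
    intro i hmi
    have hiA := hsuppA i hmi
    have hact : M i ⬝ᵥ toE.symm xs = b i := (Finset.mem_filter.1 hiA).2
    have hsub : M i ⬝ᵥ hvec = M i ⬝ᵥ x₀ - M i ⬝ᵥ toE.symm xs := by
      rw [hhvec, dotProduct_sub]
    rw [hsub, hact]
    have := hres i
    linarith
  have hsum_le : δ^2 ≤ (∑ i, m i) * ε := by
    rw [hsq, Finset.sum_mul]
    apply Finset.sum_le_sum
    intro i _
    by_cases hmi : m i = 0
    · simp [hmi]
    · exact mul_le_mul_of_nonneg_left (hterm i hmi) (hm i)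
  have hcoeff : ∑ i, m i ≤ (Fintype.card ι : ℝ) * (Cmax * δ) := by
    have hsupp0 : ∀ i ∉ (Finset.univ.filter fun i => m i ≠ 0), m i = 0 := fun i hi => by
      by_contra hc
      exact hi (Finset.mem_filter.2 ⟨Finset.mem_univ _, hc⟩)
    have hbnd := hcb (Finset.univ.filter fun i => m i ≠ 0) hindM m hsupp0
    have hnormδ : euclNorm (∑ i, m i • M i) = δ := by rw [← hrepM]
    rw [hnormδ] at hbnd
    have h1 : ∑ i, m i ≤ (Fintype.card ι : ℝ) * ‖m‖ := by
      calc ∑ i, m i ≤ ∑ _i : ι, ‖m‖ := by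
            apply Finset.sum_le_sum
            intro i _
            calc m i ≤ |m i| := le_abs_self _
              _ = ‖m i‖ := (Real.norm_eq_abs _).symm
              _ ≤ ‖m‖ := norm_le_pi_norm m i
        _ = (Fintype.card ι : ℝ) * ‖m‖ := by
            rw [Finset.sum_const, Finset.card_univ, nsmul_eq_mul]
    have h2 : ‖m‖ ≤ Cmax * δ := by
      calc ‖m‖ ≤ cs (Finset.univ.filter fun i => m i ≠ 0) * δ := hbnd
        _ ≤ Cmax * δ := mul_le_mul_of_nonneg_right (hCle _) hδnn
    calc ∑ i, m i ≤ (Fintype.card ι : ℝ) * ‖m‖ := h1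
      _ ≤ (Fintype.card ι : ℝ) * (Cmax * δ) := by
          apply mul_le_mul_of_nonneg_left h2
          positivity
  have hfinal : δ ≤ K * ε := by
    rcases eq_or_lt_of_le hδnn with h0 | hpos
    · rw [← h0, hK]
      positivity
    · have h3 : δ * δ ≤ ((Fintype.card ι : ℝ) * Cmax * ε) * δ := by
        have : δ^2 ≤ (Fintype.card ι : ℝ) * (Cmax * δ) * ε := le_trans hsum_le
          (mul_le_mul_of_nonneg_right hcoeff hε)
        nlinarith
      have h4 : δ ≤ (Fintype.card ι : ℝ) * Cmax * ε := le_of_mul_le_mul_right h3 hpos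
      calc δ ≤ (Fintype.card ι : ℝ) * Cmax * ε := h4
        _ ≤ K * ε := by
            rw [hK]
            apply mul_le_mul_of_nonneg_right _ hε
            nlinarith [hCmax_pos]
  refine ⟨toE.symm xs, hxsP, ?_⟩
  rw [← hhvec]
  exact hfinal

end Hoffman
section GraphStructure

variable {p q : ℕ}

theorem graph_rep (Φ : (Fin p → ℝ) → Set (Fin q → ℝ)) (hpoly : IsPolyhedralMapping Φ)
    (hsub : IsSublinearMapping Φ) :
    ∃ (k : ℕ) (a : Fin k → (Fin p → ℝ)) (bb : Fin k → (Fin q → ℝ)),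
      graphOf Φ = {x : (Fin p → ℝ) × (Fin q → ℝ) | ∀ i, a i ⬝ᵥ x.1 + bb i ⬝ᵥ x.2 ≤ 0} := by
  classical
  obtain ⟨k, f, c, hG⟩ := hpoly
  have h0 : ((0 : Fin p → ℝ), (0 : Fin q → ℝ)) ∈ graphOf Φ := hsub.1
  have hcnn : ∀ i, 0 ≤ c i := by
    intro i
    rw [hG] at h0
    have := h0 i
    rwa [show ((0 : Fin p → ℝ), (0 : Fin q → ℝ)) = (0 : (Fin p → ℝ) × (Fin q → ℝ)) from rfl, _root_.map_zero] at this
  have hcone := hsub.2.2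
  have hhom : graphOf Φ = {x : (Fin p → ℝ) × (Fin q → ℝ) | ∀ i, f i x ≤ 0} := by
    ext x
    constructor
    · intro hx i
      by_contra hpos
      push_neg at hpos
      set t : ℝ := (c i + 1) / f i x with htdef
      have htpos : 0 < t := div_pos (by linarith [hcnn i]) hpos
      have := hcone t htpos.le x hx
      rw [hG] at this
      have h2 := this i
      rw [_root_.map_smul] at h2
      simp only [smul_eq_mul] at h2
      rw [htdef, div_mul_cancel₀ _ hpos.ne'] at h2
      linarith
    · intro hx
      rw [hG]
      intro i
      exact le_trans (hx i) (hcnn i)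
  refine ⟨k, fun i j => f i ((fun j' => if j = j' then 1 else 0), 0),
    fun i j => f i (0, (fun j' => if j = j' then 1 else 0)), ?_⟩
  rw [hhom]
  ext x
  simp only [Set.mem_setOf_eq]
  have hdecomp : ∀ i, f i x = (fun j => f i ((fun j' => if j = j' then (1:ℝ) else 0), 0)) ⬝ᵥ x.1
      + (fun j => f i (0, (fun j' => if j = j' then (1:ℝ) else 0))) ⬝ᵥ x.2 := by
    intro i
    have hx : x = (x.1, (0 : Fin q → ℝ)) + ((0 : Fin p → ℝ), x.2) := by
      ext <;> simp
    have h1 : (x.1, (0 : Fin q → ℝ))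
        = ∑ j, x.1 j • ((fun j' => if j = j' then (1:ℝ) else 0), (0 : Fin q → ℝ)) := by
      apply Prod.ext
      · rw [Prod.fst_sum]
        simp only
        exact pi_eq_sum_univ x.1
      · rw [Prod.snd_sum]
        simp
    have h2 : ((0 : Fin p → ℝ), x.2)
        = ∑ j, x.2 j • ((0 : Fin p → ℝ), (fun j' => if j = j' then (1:ℝ) else 0)) := by
      apply Prod.ext
      · rw [Prod.fst_sum]
        simp
      · rw [Prod.snd_sum]
        simp only
        exact pi_eq_sum_univ x.2
    conv_lhs => rw [hx]
    rw [_root_.map_add]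
    congr 1
    · conv_lhs => rw [h1]
      rw [_root_.map_sum]
      unfold dotProduct
      apply Finset.sum_congr rfl
      intro j _
      rw [_root_.map_smul]
      simp [mul_comm]
    · conv_lhs => rw [h2]
      rw [_root_.map_sum]
      unfold dotProduct
      apply Finset.sum_congr rfl
      intro j _
      rw [_root_.map_smul]
      simp [mul_comm]
  constructor
  · intro hx i
    rw [← hdecomp i]
    exact hx i
  · intro hx i
    rw [hdecomp i]
    exact hx i

end GraphStructure
section AdjointRep

variable {p q : ℕ}

theorem dot_append (z u : Fin p → ℝ) (w v : Fin q → ℝ) :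
    Fin.append z w ⬝ᵥ Fin.append u v = z ⬝ᵥ u + w ⬝ᵥ v := by
  unfold dotProduct
  rw [Fin.sum_univ_add]
  congr 1
  · exact Finset.sum_congr rfl fun j _ => by rw [Fin.append_left, Fin.append_left]
  · exact Finset.sum_congr rfl fun j _ => by rw [Fin.append_right, Fin.append_right]

theorem append_split (ξ : Fin (p + q) → ℝ) :
    Fin.append (fun j => ξ (Fin.castAdd q j)) (fun j => ξ (Fin.natAdd p j)) = ξ := by
  funext i
  refine Fin.addCases (motive := fun i => Fin.append (fun j => ξ (Fin.castAdd q j))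
    (fun j => ξ (Fin.natAdd p j)) i = ξ i) (fun j => ?_) (fun j => ?_) i
  · simp only [Fin.append_left]
  · simp only [Fin.append_right]

theorem adjoint_mem_iff (Φ : (Fin p → ℝ) → Set (Fin q → ℝ)) {k : ℕ}
    (a : Fin k → (Fin p → ℝ)) (bb : Fin k → (Fin q → ℝ))
    (hGrep : graphOf Φ = {x : (Fin p → ℝ) × (Fin q → ℝ) | ∀ i, a i ⬝ᵥ x.1 + bb i ⬝ᵥ x.2 ≤ 0})
    (w : Fin q → ℝ) (z : Fin p → ℝ) :
    z ∈ upperAdjoint Φ w ↔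
      ∃ l : Fin k → ℝ, (∀ i, 0 ≤ l i) ∧ z = ∑ i, l i • a i ∧ w = -∑ i, l i • bb i := by
  classical
  have hmem : ∀ (u : Fin p → ℝ) (v : Fin q → ℝ), v ∈ Φ u ↔ ∀ i, a i ⬝ᵥ u + bb i ⬝ᵥ v ≤ 0 := by
    intro u v
    have : (u, v) ∈ graphOf Φ ↔ (u, v) ∈ {x : (Fin p → ℝ) × (Fin q → ℝ) |
        ∀ i, a i ⬝ᵥ x.1 + bb i ⬝ᵥ x.2 ≤ 0} := by rw [hGrep]
    exact this
  constructor
  · intro hz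
    -- Farkas in the appended space
    have hfeas : ∃ ξ : Fin (p + q) → ℝ, ∀ i, Fin.append (a i) (bb i) ⬝ᵥ ξ ≤ (0:ℝ) := by
      refine ⟨0, fun i => ?_⟩
      rw [dotProduct_zero]
    have himp : ∀ ξ : Fin (p + q) → ℝ, (∀ i, Fin.append (a i) (bb i) ⬝ᵥ ξ ≤ (0:ℝ)) →
        Fin.append z (-w) ⬝ᵥ ξ ≤ 0 := by
      intro ξ hξ
      set ξ₁ : Fin p → ℝ := fun j => ξ (Fin.castAdd q j) with hξ₁
      set ξ₂ : Fin q → ℝ := fun j => ξ (Fin.natAdd p j) with hξ₂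
      have hsplit : Fin.append ξ₁ ξ₂ = ξ := append_split ξ
      have hGmem : ξ₂ ∈ Φ ξ₁ := by
        rw [hmem]
        intro i
        have := hξ i
        rw [← hsplit, dot_append] at this
        exact this
      have hle := hz ξ₁ ξ₂ hGmem
      rw [← hsplit, dot_append]
      have hneg : (-w) ⬝ᵥ ξ₂ = -(w ⬝ᵥ ξ₂) := by simp
      rw [hneg]
      linarith
    obtain ⟨l, hl, hrep, _⟩ := farkas (fun i => Fin.append (a i) (bb i)) (fun _ => (0:ℝ))
      (Fin.append z (-w)) 0 hfeas himp
    refine ⟨l, hl, ?_, ?_⟩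
    · funext j
      have := congrFun hrep (Fin.castAdd q j)
      rw [Fin.append_left, Finset.sum_apply] at this
      rw [this, Finset.sum_apply]
      apply Finset.sum_congr rfl
      intro i _
      simp only [Pi.smul_apply, Fin.append_left]
    · funext j
      have := congrFun hrep (Fin.natAdd p j)
      rw [Fin.append_right, Finset.sum_apply] at this
      simp only [Pi.neg_apply] at this
      have h2 : w j = -∑ c : Fin k, (l c • Fin.append (a c) (bb c)) (Fin.natAdd p j) := by
        rw [← this]; ring
      simp only [Pi.neg_apply, Finset.sum_apply]
      rw [h2, neg_inj]
      apply Finset.sum_congr rfl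
      intro i _
      simp only [Pi.smul_apply, Fin.append_right]
  · rintro ⟨l, hl, hz, hw⟩
    intro u v hv
    rw [hmem] at hv
    have hcalc : z ⬝ᵥ u - w ⬝ᵥ v = ∑ i, l i * (a i ⬝ᵥ u + bb i ⬝ᵥ v) := by
      rw [hz, hw]
      have h1 : (∑ i, l i • a i) ⬝ᵥ u = ∑ i, l i * (a i ⬝ᵥ u) := by
        unfold dotProduct
        simp only [Finset.sum_apply, Finset.sum_mul, Pi.smul_apply, smul_eq_mul]
        rw [Finset.sum_comm]
        apply Finset.sum_congr rfl
        intro i _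
        rw [Finset.mul_sum]
        apply Finset.sum_congr rfl
        intro j _
        ring
      have h2 : (-∑ i, l i • bb i) ⬝ᵥ v = -∑ i, l i * (bb i ⬝ᵥ v) := by
        rw [neg_dotProduct, neg_inj]
        unfold dotProduct
        simp only [Finset.sum_apply, Finset.sum_mul, Pi.smul_apply, smul_eq_mul]
        rw [Finset.sum_comm]
        apply Finset.sum_congr rfl
        intro i _
        rw [Finset.mul_sum]
        apply Finset.sum_congr rfl
        intro j _
        ring
      rw [h1, h2, sub_neg_eq_add, ← Finset.sum_add_distrib]
      apply Finset.sum_congr rfl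
      intro i _
      ring
    have hsum : ∑ i, l i * (a i ⬝ᵥ u + bb i ⬝ᵥ v) ≤ 0 :=
      Finset.sum_nonpos fun i _ => mul_nonpos_of_nonneg_of_nonpos (hl i) (hv i)
    linarith [hcalc, hsum]

end AdjointRep
section AdjointBound

variable {p q : ℕ}

theorem adjoint_hoffman_bound (νp : (Fin p → ℝ) → ℝ) (νq : (Fin q → ℝ) → ℝ)
    (hνp : IsNorm νp) (hνq : IsNorm νq)
    (Φ : (Fin p → ℝ) → Set (Fin q → ℝ)) {k : ℕ}
    (a : Fin k → (Fin p → ℝ)) (bb : Fin k → (Fin q → ℝ))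
    (hGrep : graphOf Φ = {x : (Fin p → ℝ) × (Fin q → ℝ) | ∀ i, a i ⬝ᵥ x.1 + bb i ⬝ᵥ x.2 ≤ 0}) :
    ∃ C > 0, ∀ (w : Fin q → ℝ) (z' : Fin p → ℝ), w ∈ domOf (upperAdjoint Φ) →
      z' ∈ imOf (upperAdjoint Φ) →
      distWith (dualNorm νp) z' (upperAdjoint Φ w) ≤
        C * distWith (dualNorm νq) w (invOf (upperAdjoint Φ) z') := by
  classical
  set R : ((Fin q) ⊕ (Fin q)) ⊕ (Fin k) → (Fin k → ℝ) :=
    Sum.elim (Sum.elim (fun t => fun i => bb i t) (fun t => fun i => -(bb i t)))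
      (fun i₀ => fun i => if i = i₀ then (-1:ℝ) else 0) with hR
  obtain ⟨KH, hKHpos, hof⟩ := hoffman_lemma R
  obtain ⟨c1, hc1, hc1le⟩ := (isNorm_euclNorm (k := k)).norm_le_mul
  obtain ⟨c2, hc2, hc2le⟩ := (isNorm_dualNorm hνq).norm_le_mul
  set Ca : ℝ := ∑ i, dualNorm νp (a i) with hCa
  have hCann : 0 ≤ Ca := Finset.sum_nonneg fun i _ => dualNorm_nonneg hνp _
  set C : ℝ := (Ca + 1) * c1 * KH * c2 with hC
  have hCpos : 0 < C := by positivity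
  refine ⟨C, hCpos, ?_⟩
  intro w z' hw hz'
  have hdotbb : ∀ (lv : Fin k → ℝ) (t : Fin q), (fun i => bb i t) ⬝ᵥ lv = (∑ i, lv i • bb i) t := by
    intro lv t
    rw [Finset.sum_apply]
    unfold dotProduct
    apply Finset.sum_congr rfl
    intro i _
    simp [mul_comm]
  have hdotbb' : ∀ (lv : Fin k → ℝ) (t : Fin q),
      (fun i => -(bb i t)) ⬝ᵥ lv = -((∑ i, lv i • bb i) t) := by
    intro lv t
    rw [← hdotbb lv t]
    unfold dotProduct
    rw [← Finset.sum_neg_distrib]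
    apply Finset.sum_congr rfl
    intro i _
    ring
  have hdotneg : ∀ (lv : Fin k → ℝ) (i₀ : Fin k),
      (fun i => if i = i₀ then (-1:ℝ) else 0) ⬝ᵥ lv = -(lv i₀) := by
    intro lv i₀
    unfold dotProduct
    rw [Finset.sum_eq_single i₀]
    · simp
    · intro b' _ hb'; simp [hb']
    · intro h; exact absurd (Finset.mem_univ i₀) h
  obtain ⟨z₀, hz₀⟩ := hw
  obtain ⟨l₀, hl₀nn, _, hl₀w⟩ := (adjoint_mem_iff Φ a bb hGrep w z₀).1 hz₀
  set bvec : ((Fin q) ⊕ (Fin q)) ⊕ (Fin k) → ℝ :=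
    Sum.elim (Sum.elim (fun t => -(w t)) (fun t => w t)) (fun _ => 0) with hbvec
  have hsum₀ : (∑ i, l₀ i • bb i) = -w := by rw [hl₀w]; simp
  have hfeas : ∃ y, ∀ j, R j ⬝ᵥ y ≤ bvec j := by
    refine ⟨l₀, ?_⟩
    rintro ((t | t) | i₀)
    · show (fun i => bb i t) ⬝ᵥ l₀ ≤ -(w t)
      rw [hdotbb, hsum₀]
      simp
    · show (fun i => -(bb i t)) ⬝ᵥ l₀ ≤ w t
      rw [hdotbb', hsum₀]
      simp
    · show (fun i => if i = i₀ then (-1:ℝ) else 0) ⬝ᵥ l₀ ≤ 0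
      rw [hdotneg]
      linarith [hl₀nn i₀]
  -- main estimate for each w'' in the inverse image
  have hmain : ∀ w'', z' ∈ upperAdjoint Φ w'' →
      distWith (dualNorm νp) z' (upperAdjoint Φ w) ≤ C * dualNorm νq (w - w'') := by
    intro w'' hw''
    obtain ⟨l'', hl''nn, hz'rep, hw''rep⟩ := (adjoint_mem_iff Φ a bb hGrep w'' z').1 hw''
    have hsum'' : (∑ i, l'' i • bb i) = -w'' := by rw [hw''rep]; simp
    set ε : ℝ := ‖w - w''‖ with hε
    have hεnn : 0 ≤ ε := norm_nonneg _
    have habs : ∀ t, |w t - w'' t| ≤ ε := by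
      intro t
      have := norm_le_pi_norm (w - w'') t
      simpa [Real.norm_eq_abs] using this
    have hres : ∀ j, R j ⬝ᵥ l'' ≤ bvec j + ε := by
      rintro ((t | t) | i₀)
      · show (fun i => bb i t) ⬝ᵥ l'' ≤ -(w t) + ε
        rw [hdotbb, hsum'']
        have := (abs_le.1 (habs t)).2
        simp only [Pi.neg_apply]
        linarith
      · show (fun i => -(bb i t)) ⬝ᵥ l'' ≤ w t + ε
        rw [hdotbb', hsum'']
        have := (abs_le.1 (habs t)).1
        simp only [Pi.neg_apply, neg_neg]
        linarith
      · show (fun i => if i = i₀ then (-1:ℝ) else 0) ⬝ᵥ l'' ≤ 0 + ε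
        rw [hdotneg]
        linarith [hl''nn i₀]
    obtain ⟨lam, hlamfeas, hlamclose⟩ := hof bvec l'' ε hεnn hfeas hres
    have hlamnn : ∀ i, 0 ≤ lam i := by
      intro i
      have := hlamfeas (Sum.inr i)
      rw [show R (Sum.inr i) = (fun i' => if i' = i then (-1:ℝ) else 0) from rfl, hdotneg] at this
      have hb0 : bvec (Sum.inr i) = 0 := rfl
      rw [hb0] at this
      linarith
    have hlamw : w = -∑ i, lam i • bb i := by
      funext t
      have h1 := hlamfeas (Sum.inl (Sum.inl t))
      have h2 := hlamfeas (Sum.inl (Sum.inr t))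
      rw [show R (Sum.inl (Sum.inl t)) = (fun i => bb i t) from rfl, hdotbb] at h1
      rw [show R (Sum.inl (Sum.inr t)) = (fun i => -(bb i t)) from rfl, hdotbb'] at h2
      have hb1 : bvec (Sum.inl (Sum.inl t)) = -(w t) := rfl
      have hb2 : bvec (Sum.inl (Sum.inr t)) = w t := rfl
      rw [hb1] at h1
      rw [hb2] at h2
      simp only [Pi.neg_apply, Finset.sum_apply]
      rw [show (∑ i, lam i • bb i) t = ∑ i, (lam i • bb i) t from Finset.sum_apply _ _ _] at h1 h2
      linarith
    have hzmem : (∑ i, lam i • a i) ∈ upperAdjoint Φ w :=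
      (adjoint_mem_iff Φ a bb hGrep w _).2 ⟨lam, hlamnn, rfl, hlamw⟩
    have hnum_le : distWith (dualNorm νp) z' (upperAdjoint Φ w)
        ≤ dualNorm νp (z' - ∑ i, lam i • a i) := distWith_le (isNorm_dualNorm hνp) hzmem
    have hdiff : z' - (∑ i, lam i • a i) = ∑ i, (l'' i - lam i) • a i := by
      rw [hz'rep, ← Finset.sum_sub_distrib]
      apply Finset.sum_congr rfl
      intro i _
      rw [sub_smul]
    have hbound : dualNorm νp (z' - ∑ i, lam i • a i) ≤ Ca * ‖l'' - lam‖ := by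
      rw [hdiff]
      calc dualNorm νp (∑ i, (l'' i - lam i) • a i)
          ≤ ∑ i, dualNorm νp ((l'' i - lam i) • a i) := (isNorm_dualNorm hνp).sum_le _ _
        _ = ∑ i, |l'' i - lam i| * dualNorm νp (a i) := by
            apply Finset.sum_congr rfl
            intro i _
            rw [(isNorm_dualNorm hνp).smul]
        _ ≤ ∑ i, ‖l'' - lam‖ * dualNorm νp (a i) := by
            apply Finset.sum_le_sum
            intro i _
            apply mul_le_mul_of_nonneg_right _ (dualNorm_nonneg hνp _)
            have := norm_le_pi_norm (l'' - lam) i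
            simpa [Real.norm_eq_abs] using this
        _ = Ca * ‖l'' - lam‖ := by
            rw [← Finset.mul_sum, ← hCa, mul_comm]
    have hchain : dualNorm νp (z' - ∑ i, lam i • a i) ≤ C * dualNorm νq (w - w'') := by
      have s1 : ‖l'' - lam‖ ≤ c1 * euclNorm (l'' - lam) := hc1le _
      have s2 : euclNorm (l'' - lam) ≤ KH * ε := hlamclose
      have s3 : ε ≤ c2 * dualNorm νq (w - w'') := hc2le _
      have hdq : 0 ≤ dualNorm νq (w - w'') := dualNorm_nonneg hνq _
      have h1 : ‖l'' - lam‖ ≤ c1 * (KH * (c2 * dualNorm νq (w - w''))) := by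
        calc ‖l'' - lam‖ ≤ c1 * euclNorm (l'' - lam) := s1
          _ ≤ c1 * (KH * ε) := mul_le_mul_of_nonneg_left s2 hc1.le
          _ ≤ c1 * (KH * (c2 * dualNorm νq (w - w''))) :=
              mul_le_mul_of_nonneg_left (mul_le_mul_of_nonneg_left s3 hKHpos.le) hc1.le
      calc dualNorm νp (z' - ∑ i, lam i • a i) ≤ Ca * ‖l'' - lam‖ := hbound
        _ ≤ (Ca + 1) * ‖l'' - lam‖ := by
            apply mul_le_mul_of_nonneg_right _ (norm_nonneg _)
            linarith
        _ ≤ (Ca + 1) * (c1 * (KH * (c2 * dualNorm νq (w - w'')))) :=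
            mul_le_mul_of_nonneg_left h1 (by linarith)
        _ = C * dualNorm νq (w - w'') := by rw [hC]; ring
    exact le_trans hnum_le hchain
  -- conclude: num ≤ C * den
  obtain ⟨S, ⟨w₀'', rfl⟩, hw₀''⟩ := hz'
  have hinv_ne : (invOf (upperAdjoint Φ) z').Nonempty := ⟨w₀'', hw₀''⟩
  have hden : distWith (dualNorm νp) z' (upperAdjoint Φ w) / C
      ≤ distWith (dualNorm νq) w (invOf (upperAdjoint Φ) z') := by
    apply le_distWith hinv_ne
    intro w'' hw''
    rw [div_le_iff₀ hCpos, mul_comm]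
    exact hmain w'' hw''
  rw [div_le_iff₀ hCpos] at hden
  linarith [hden]

end AdjointBound
section DualLower

theorem div_le_div_of_nonneg_right' {a b c : ℝ} (h : a ≤ b) (hc : 0 < c) : a / c ≤ b / c := by
  rw [div_le_div_iff₀ hc hc]
  nlinarith

variable {p q : ℕ}

theorem sum_smul_dot {k n : ℕ} (l : Fin k → ℝ) (a : Fin k → (Fin n → ℝ)) (u : Fin n → ℝ) :
    (∑ i, l i • a i) ⬝ᵥ u = ∑ i, l i * (a i ⬝ᵥ u) := by
  unfold dotProduct
  simp only [Finset.sum_apply, Finset.sum_mul, Pi.smul_apply, smul_eq_mul]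
  rw [Finset.sum_comm]
  apply Finset.sum_congr rfl
  intro i _
  rw [Finset.mul_sum]
  apply Finset.sum_congr rfl
  intro j _
  ring

theorem invOf_adjoint_closed (Φ : (Fin p → ℝ) → Set (Fin q → ℝ)) (z' : Fin p → ℝ) :
    IsClosed (invOf (upperAdjoint Φ) z') := by
  have : invOf (upperAdjoint Φ) z' =
      ⋂ (uv : {x : (Fin p → ℝ) × (Fin q → ℝ) // x.2 ∈ Φ x.1}),
        {ω : Fin q → ℝ | z' ⬝ᵥ (uv : (Fin p → ℝ) × (Fin q → ℝ)).1 ≤ ω ⬝ᵥ (uv : (Fin p → ℝ) × (Fin q → ℝ)).2} := by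
    ext ω
    simp only [invOf, upperAdjoint, Set.mem_setOf_eq, Set.mem_iInter]
    constructor
    · intro h uv
      exact h uv.1.1 uv.1.2 uv.2
    · intro h u v hv
      exact h ⟨(u, v), hv⟩
  rw [this]
  refine isClosed_iInter fun uv => ?_
  apply isClosed_le continuous_const
  unfold dotProduct
  exact continuous_finset_sum _ fun j _ => (continuous_apply j).mul continuous_const

theorem dual_ratio_lower (νp : (Fin p → ℝ) → ℝ) (νq : (Fin q → ℝ) → ℝ)
    (hνp : IsNorm νp) (hνq : IsNorm νq)
    (Φ : (Fin p → ℝ) → Set (Fin q → ℝ)) {k : ℕ}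
    (a : Fin k → (Fin p → ℝ)) (bb : Fin k → (Fin q → ℝ))
    (hGrep : graphOf Φ = {x : (Fin p → ℝ) × (Fin q → ℝ) | ∀ i, a i ⬝ᵥ x.1 + bb i ⬝ᵥ x.2 ≤ 0})
    (x : Fin p → ℝ) (hx : x ∈ domOf Φ) (hx0 : x ≠ 0)
    (γ : ℝ) (hγpos : 0 < γ) (hγle : ∀ y ∈ Φ x, γ ≤ νq y) :
    ∃ wu zv, wu ∈ domOf (upperAdjoint Φ) ∧ zv ∈ imOf (upperAdjoint Φ) ∧
      zv ∉ upperAdjoint Φ wu ∧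
      γ / νp x ≤ distWith (dualNorm νp) zv (upperAdjoint Φ wu) /
        distWith (dualNorm νq) wu (invOf (upperAdjoint Φ) zv) := by
  classical
  obtain ⟨y₀, hy₀⟩ := hx
  have hνpx : 0 < νp x := hνp.pos hx0
  -- membership characterization of Φ x
  have hmem : ∀ (u : Fin p → ℝ) (v : Fin q → ℝ), v ∈ Φ u ↔ ∀ i, a i ⬝ᵥ u + bb i ⬝ᵥ v ≤ 0 := by
    intro u v
    have : (u, v) ∈ graphOf Φ ↔ (u, v) ∈ {x : (Fin p → ℝ) × (Fin q → ℝ) |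
        ∀ i, a i ⬝ᵥ x.1 + bb i ⬝ᵥ x.2 ≤ 0} := by rw [hGrep]
    exact this
  have hΦxconv : Convex ℝ (Φ x) := by
    intro y hy y' hy' s t hs ht hst
    rw [hmem] at hy hy' ⊢
    intro i
    have h1 := hy i
    have h2 := hy' i
    have hcalc : a i ⬝ᵥ x + bb i ⬝ᵥ (s • y + t • y')
        = s * (a i ⬝ᵥ x + bb i ⬝ᵥ y) + t * (a i ⬝ᵥ x + bb i ⬝ᵥ y') := by
      rw [dotProduct_add, dotProduct_smul, dotProduct_smul]
      have : s * (a i ⬝ᵥ x) + t * (a i ⬝ᵥ x) = a i ⬝ᵥ x := by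
        rw [← add_mul, hst, one_mul]
      simp only [smul_eq_mul]
      linarith [this]
    rw [hcalc]
    have := mul_nonneg hs (neg_nonneg.2 h1)
    nlinarith
  -- separation
  set U : Set (Fin q → ℝ) := {y | νq y < γ} with hU
  have hUopen : IsOpen U := by
    have : U = νq ⁻¹' (Set.Iio γ) := rfl
    rw [this]
    exact hνq.continuous.isOpen_preimage _ isOpen_Iio
  have hUconv : Convex ℝ U := by
    intro y hy y' hy' s t hs ht hst
    simp only [hU, Set.mem_setOf_eq] at hy hy' ⊢
    calc νq (s • y + t • y') ≤ νq (s • y) + νq (t • y') := hνq.triangle _ _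
      _ = s * νq y + t * νq y' := by
          rw [hνq.smul, hνq.smul, abs_of_nonneg hs, abs_of_nonneg ht]
      _ < γ := by
          rcases eq_or_lt_of_le hs with hs0 | hs0
          · rw [← hs0] at hst ⊢
            simp only [zero_mul, zero_add] at hst ⊢
            rw [hst] at *
            nlinarith
          · rcases eq_or_lt_of_le ht with ht0 | ht0
            · rw [← ht0] at hst ⊢
              simp only [zero_mul, add_zero] at hst ⊢
              rw [hst] at *
              nlinarith
            · nlinarith
  have hdisj : Disjoint U (Φ x) := by
    rw [Set.disjoint_left]
    intro y hyU hyΦ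
    exact absurd (hγle y hyΦ) (not_le.2 hyU)
  obtain ⟨f, u, hfU, hfΦ⟩ := geometric_hahn_banach_open hUconv hUopen hΦxconv hdisj
  set w₀ : Fin q → ℝ := fun i => f (fun j => if i = j then 1 else 0) with hw₀
  have hfdot : ∀ y, f y = w₀ ⬝ᵥ y := fun y => linfunc_eq_dot f y
  have hupos : 0 < u := by
    have h0U : (0 : Fin q → ℝ) ∈ U := by
      simp only [hU, Set.mem_setOf_eq, hνq.zero]
      exact hγpos
    have := hfU 0 h0U
    simpa using this
  have hw₀ne : w₀ ≠ 0 := by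
    intro hc
    have := hfΦ y₀ hy₀
    rw [hfdot y₀, hc] at this
    simp only [zero_dotProduct] at this
    linarith
  have hscale : ∀ y, νq y ≤ 1 → γ * (w₀ ⬝ᵥ y) ≤ u := by
    intro y hy
    by_contra hcon
    push_neg at hcon
    set s := γ * (w₀ ⬝ᵥ y) with hs
    have hspos : 0 < s := lt_trans hupos hcon
    set t : ℝ := (u / s + 1) / 2 with ht
    have ht01 : 0 < t ∧ t < 1 := by
      constructor
      · have : 0 < u / s := div_pos hupos hspos
        rw [ht]; linarith
      · have : u / s < 1 := (div_lt_one hspos).2 hcon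
        rw [ht]; linarith
    have hmemU : (t * γ) • y ∈ U := by
      simp only [hU, Set.mem_setOf_eq]
      rw [hνq.smul, abs_of_nonneg (by positivity)]
      calc t * γ * νq y ≤ t * γ * 1 := by
            apply mul_le_mul_of_nonneg_left hy
            positivity
        _ = t * γ := mul_one _
        _ < 1 * γ := by
            apply mul_lt_mul_of_pos_right ht01.2 hγpos
        _ = γ := one_mul γ
    have := hfU _ hmemU
    rw [hfdot, dotProduct_smul] at this
    have hval : t * s = (u + s) / 2 := by
      rw [ht]
      field_simp
    simp only [smul_eq_mul] at this
    have : t * γ * (w₀ ⬝ᵥ y) < u := this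
    rw [mul_assoc, ← hs] at this
    rw [hval] at this
    linarith
  have hw₀dual_le : dualNorm νq w₀ ≤ u / γ := by
    apply Real.sSup_le
    · rintro r ⟨y, hy, rfl⟩
      rw [le_div_iff₀ hγpos]
      calc w₀ ⬝ᵥ y * γ = γ * (w₀ ⬝ᵥ y) := mul_comm _ _
        _ ≤ u := hscale y hy
    · positivity
  have hw₀dual_pos : 0 < dualNorm νq w₀ := (isNorm_dualNorm hνq).pos hw₀ne
  set w : Fin q → ℝ := (dualNorm νq w₀)⁻¹ • w₀ with hw
  have hwdual : dualNorm νq w = 1 := by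
    rw [hw, dualNorm_smul hνq, abs_of_nonneg (by positivity), inv_mul_cancel₀ hw₀dual_pos.ne']
  have hwγ : ∀ y ∈ Φ x, γ ≤ w ⬝ᵥ y := by
    intro y hy
    rw [hw, smul_dotProduct]
    have h1 : u ≤ w₀ ⬝ᵥ y := by rw [← hfdot]; exact hfΦ y hy
    have hkey : γ ≤ (dualNorm νq w₀)⁻¹ * u := by
      have h2 : γ * dualNorm νq w₀ ≤ u := by
        have h3 := mul_le_mul_of_nonneg_left hw₀dual_le hγpos.le
        calc γ * dualNorm νq w₀ ≤ γ * (u/γ) := h3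
          _ = u := by field_simp
      calc γ = (γ * dualNorm νq w₀) * (dualNorm νq w₀)⁻¹ := by field_simp
        _ ≤ u * (dualNorm νq w₀)⁻¹ := mul_le_mul_of_nonneg_right h2 (by positivity)
        _ = (dualNorm νq w₀)⁻¹ * u := mul_comm _ _
    calc γ ≤ (dualNorm νq w₀)⁻¹ * u := hkey
      _ ≤ (dualNorm νq w₀)⁻¹ * (w₀ ⬝ᵥ y) := mul_le_mul_of_nonneg_left h1 (by positivity)
      _ = (dualNorm νq w₀)⁻¹ • (w₀ ⬝ᵥ y) := rfl
  -- the optimal value m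
  set m : ℝ := sInf ((fun y => w ⬝ᵥ y) '' Φ x) with hm
  have hmbdd : BddBelow ((fun y => w ⬝ᵥ y) '' Φ x) :=
    ⟨γ, by rintro r ⟨y, hy, rfl⟩; exact hwγ y hy⟩
  have hmne : ((fun y => w ⬝ᵥ y) '' Φ x).Nonempty := ⟨_, ⟨y₀, hy₀, rfl⟩⟩
  have hγm : γ ≤ m := le_csInf hmne (by rintro r ⟨y, hy, rfl⟩; exact hwγ y hy)
  have hmle : ∀ y ∈ Φ x, m ≤ w ⬝ᵥ y := fun y hy => csInf_le hmbdd ⟨y, hy, rfl⟩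
  have hmpos : 0 < m := lt_of_lt_of_le hγpos hγm
  -- Farkas
  have hfeas : ∃ y, ∀ i, bb i ⬝ᵥ y ≤ -(a i ⬝ᵥ x) := by
    refine ⟨y₀, fun i => ?_⟩
    have := (hmem x y₀).1 hy₀ i
    linarith
  have himp : ∀ y, (∀ i, bb i ⬝ᵥ y ≤ -(a i ⬝ᵥ x)) → (-w) ⬝ᵥ y ≤ -m := by
    intro y hy
    have hyΦ : y ∈ Φ x := (hmem x y).2 (fun i => by linarith [hy i])
    have := hmle y hyΦ
    rw [neg_dotProduct]
    linarith
  obtain ⟨l, hl, hwrep, hval⟩ := farkas bb (fun i => -(a i ⬝ᵥ x)) (-w) (-m) hfeas himp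
  set z₀ : Fin p → ℝ := ∑ i, l i • a i with hz₀
  have hwrep' : w = -∑ i, l i • bb i := by rw [← hwrep]; simp
  have hz₀mem : z₀ ∈ upperAdjoint Φ w :=
    (adjoint_mem_iff Φ a bb hGrep w z₀).2 ⟨l, hl, rfl, hwrep'⟩
  have hz₀x : m ≤ z₀ ⬝ᵥ x := by
    rw [hz₀, sum_smul_dot]
    have hneg : ∑ i, l i * (-(a i ⬝ᵥ x)) = -∑ i, l i * (a i ⬝ᵥ x) := by
      rw [← Finset.sum_neg_distrib]
      apply Finset.sum_congr rfl
      intro i _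
      ring
    rw [hneg] at hval
    linarith
  have hweak : ∀ z ∈ upperAdjoint Φ w, z ⬝ᵥ x ≤ m := by
    intro z hz
    apply le_csInf hmne
    rintro r ⟨y, hy, rfl⟩
    exact hz x y hy
  set zv : Fin p → ℝ := (2:ℝ) • z₀ with hzv
  have hzv_mem : zv ∈ upperAdjoint Φ ((2:ℝ) • w) := by
    intro u' v' hv'
    have := hz₀mem u' v' hv'
    rw [hzv, smul_dotProduct, smul_dotProduct]
    simp only [smul_eq_mul]
    linarith
  have hzv_im : zv ∈ imOf (upperAdjoint Φ) := Set.mem_iUnion.2 ⟨(2:ℝ) • w, hzv_mem⟩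
  have hw_dom : w ∈ domOf (upperAdjoint Φ) := ⟨z₀, hz₀mem⟩
  have hzvx : zv ⬝ᵥ x = 2 * (z₀ ⬝ᵥ x) := by
    rw [hzv, smul_dotProduct]; rfl
  have hzv_not : zv ∉ upperAdjoint Φ w := by
    intro hc
    have h1 := hweak zv hc
    nlinarith
  refine ⟨w, zv, hw_dom, hzv_im, hzv_not, ?_⟩
  set num := distWith (dualNorm νp) zv (upperAdjoint Φ w) with hnum
  set den := distWith (dualNorm νq) w (invOf (upperAdjoint Φ) zv) with hden
  have hnum_lb : m / νp x ≤ num := by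
    apply le_distWith ⟨z₀, hz₀mem⟩
    intro z hz
    have hx1 : νp ((νp x)⁻¹ • x) ≤ 1 := by
      rw [hνp.smul, abs_of_nonneg (by positivity), inv_mul_cancel₀ hνpx.ne']
    have h1 := le_dualNorm hνp (zv - z) hx1
    rw [dotProduct_smul] at h1
    have h2 : (zv - z) ⬝ᵥ x = zv ⬝ᵥ x - z ⬝ᵥ x := sub_dotProduct _ _ _
    have h4 : z ⬝ᵥ x ≤ m := hweak z hz
    have h5 : m ≤ (zv - z) ⬝ᵥ x := by rw [h2, hzvx]; nlinarith [hz₀x]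
    calc m / νp x = (νp x)⁻¹ * m := by rw [div_eq_inv_mul]
      _ ≤ (νp x)⁻¹ * ((zv - z) ⬝ᵥ x) := mul_le_mul_of_nonneg_left h5 (by positivity)
      _ = (νp x)⁻¹ • ((zv - z) ⬝ᵥ x) := rfl
      _ ≤ dualNorm νp (zv - z) := h1
  have hden_ub : den ≤ 1 := by
    have hmem2 : (2:ℝ) • w ∈ invOf (upperAdjoint Φ) zv := hzv_mem
    have hle := distWith_le (x := w) (isNorm_dualNorm hνq) hmem2
    have hcalc : w - (2:ℝ) • w = (-1 : ℝ) • w := by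
      funext j
      simp only [Pi.sub_apply, Pi.smul_apply, smul_eq_mul]
      ring
    rw [hcalc, dualNorm_smul hνq] at hle
    simp only [abs_neg, abs_one, one_mul] at hle
    rw [hwdual] at hle
    exact hle
  have hden_pos : 0 < den :=
    distWith_pos (isNorm_dualNorm hνq) (invOf_adjoint_closed Φ zv)
      ⟨(2:ℝ) • w, hzv_mem⟩ (fun hc => hzv_not hc)
  have hnum_nn : 0 ≤ num := distWith_nonneg (isNorm_dualNorm hνp) _ _
  have hratio : num ≤ num / den := by
    rw [le_div_iff₀ hden_pos]
    calc num * den ≤ num * 1 := mul_le_mul_of_nonneg_left hden_ub hnum_nn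
      _ = num := mul_one _
  calc γ / νp x ≤ m / νp x := by
        apply div_le_div_of_nonneg_right' hγm hνpx
    _ ≤ num := hnum_lb
    _ ≤ num / den := hratio

end DualLower

/-- If `dom(Φ)` is a linear subspace, then `H(Φ) ≤ H(Φ*)`. -/
theorem stmt4 {p q : ℕ} (νp : (Fin p → ℝ) → ℝ) (νq : (Fin q → ℝ) → ℝ)
    (hνp : IsNorm νp) (hνq : IsNorm νq)
    (Φ : (Fin p → ℝ) → Set (Fin q → ℝ)) (hpoly : IsPolyhedralMapping Φ)
    (hsub : IsSublinearMapping Φ) (hdom : IsLinearSubspace (domOf Φ)) :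
    hoffmanConst νp νq Φ ≤ hoffmanConst (dualNorm νq) (dualNorm νp) (upperAdjoint Φ) := by
  classical
  obtain ⟨k, a, bb, hGrep⟩ := graph_rep Φ hpoly hsub
  obtain ⟨C, hCpos, hCbd⟩ := adjoint_hoffman_bound νp νq hνp hνq Φ a bb hGrep
  set Ψ := upperAdjoint Φ with hΨ
  set SR := {r | ∃ u v, u ∈ domOf Ψ ∧ v ∈ imOf Ψ ∧ v ∉ Ψ u ∧
    r = distWith (dualNorm νp) v (Ψ u) / distWith (dualNorm νq) u (invOf Ψ v)} with hSR
  have hHR : hoffmanConst (dualNorm νq) (dualNorm νp) Ψ = sSup SR := rfl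
  have hub : ∀ r ∈ SR, r ≤ C := by
    rintro r ⟨u, v, hu, hv, hvn, rfl⟩
    have hb := hCbd u v hu hv
    have hdenn : 0 ≤ distWith (dualNorm νq) u (invOf Ψ v) :=
      distWith_nonneg (isNorm_dualNorm hνq) _ _
    rcases eq_or_lt_of_le hdenn with h0 | hpos
    · have h1 : distWith (dualNorm νp) v (Ψ u) ≤ 0 := by
        rw [← h0] at hb
        simpa using hb
      have h2 : distWith (dualNorm νp) v (Ψ u) = 0 :=
        le_antisymm h1 (distWith_nonneg (isNorm_dualNorm hνp) _ _)
      rw [h2, zero_div]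
      exact hCpos.le
    · rw [div_le_iff₀ hpos]
      calc distWith (dualNorm νp) v (Ψ u) ≤ C * distWith (dualNorm νq) u (invOf Ψ v) := hb
        _ = C * distWith (dualNorm νq) u (invOf Ψ v) := rfl
  have hbdd : BddAbove SR := ⟨C, fun r hr => hub r hr⟩
  have hHRnn : (0:ℝ) ≤ sSup SR := Real.sSup_nonneg (by
    rintro r ⟨u, v, _, _, _, rfl⟩
    exact div_nonneg (distWith_nonneg (isNorm_dualNorm hνp) _ _)
      (distWith_nonneg (isNorm_dualNorm hνq) _ _))
  set HR := sSup SR with hHRdef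
  -- key inequality: the "norm" of Φ is bounded by HR
  have hkey : ∀ x ∈ domOf Φ, sInf (νq '' Φ x) ≤ HR * νp x := by
    intro x hxdom
    have hlb : ∀ r ∈ νq '' Φ x, (0:ℝ) ≤ r := by
      rintro r ⟨y, _, rfl⟩
      exact hνq.nonneg y
    have hgnn : 0 ≤ sInf (νq '' Φ x) := Real.sInf_nonneg hlb
    rcases eq_or_lt_of_le hgnn with h0 | hgpos
    · rw [← h0]
      exact mul_nonneg hHRnn (hνp.nonneg x)
    · have hx0 : x ≠ 0 := by
        intro hc
        have h00 : (0 : Fin q → ℝ) ∈ Φ x := by rw [hc]; exact hsub.1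
        have hle := csInf_le (⟨0, hlb⟩ : BddBelow (νq '' Φ x)) ⟨0, h00, hνq.zero⟩
        linarith
      by_contra hcon
      push_neg at hcon
      set γ := (HR * νp x + sInf (νq '' Φ x)) / 2 with hγ
      have hHRνnn : 0 ≤ HR * νp x := mul_nonneg hHRnn (hνp.nonneg x)
      have hγpos : 0 < γ := by rw [hγ]; linarith
      have hγle : ∀ y ∈ Φ x, γ ≤ νq y := by
        intro y hy
        have h1 : sInf (νq '' Φ x) ≤ νq y := csInf_le ⟨0, hlb⟩ ⟨y, hy, rfl⟩
        rw [hγ]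
        linarith
      obtain ⟨wu, zv, h1, h2, h3, h4⟩ := dual_ratio_lower νp νq hνp hνq Φ a bb hGrep
        x hxdom hx0 γ hγpos hγle
      have hmemSR : (distWith (dualNorm νp) zv (Ψ wu) /
          distWith (dualNorm νq) wu (invOf Ψ zv)) ∈ SR := ⟨wu, zv, h1, h2, h3, rfl⟩
      have hsup := le_csSup hbdd hmemSR
      have hfin : γ / νp x ≤ HR := le_trans h4 hsup
      have hνpx := hνp.pos hx0
      rw [div_le_iff₀ hνpx] at hfin
      rw [hγ] at hfin
      linarith
  -- final bound
  rw [hHR]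
  apply Real.sSup_le _ hHRnn
  rintro r ⟨u, v, hu, hv, hvn, rfl⟩
  have hβnn : 0 ≤ distWith νp u (invOf Φ v) := distWith_nonneg hνp _ _
  rcases eq_or_lt_of_le hβnn with hb0 | hbpos
  · rw [← hb0, div_zero]
    exact hHRnn
  · rw [div_le_iff₀ hbpos]
    set β := distWith νp u (invOf Φ v) with hβ
    set α := distWith νq v (Φ u) with hα
    have hαle : ∀ ε, 0 < ε → α ≤ HR * (β + ε) := by
      intro ε hε
      have himgne : ((fun s => νp (u - s)) '' invOf Φ v).Nonempty := by
        obtain ⟨u₀, hu₀⟩ := Set.mem_iUnion.1 hv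
        exact ⟨_, ⟨u₀, hu₀, rfl⟩⟩
      have hlt : sInf ((fun s => νp (u - s)) '' invOf Φ v) < β + ε := by
        show distWith νp u (invOf Φ v) < β + ε
        rw [← hβ]
        linarith
      obtain ⟨r', ⟨u', hu', rfl⟩, hr'⟩ := exists_lt_of_csInf_lt himgne hlt
      set xw := u - u' with hxw
      have hu'dom : u' ∈ domOf Φ := ⟨v, hu'⟩
      have hxdom : xw ∈ domOf Φ := by
        obtain ⟨W, hW⟩ := hdom
        rw [hW] at hu'dom hu ⊢
        exact W.sub_mem hu hu'dom
      have hαe : ∀ e ∈ Φ xw, α ≤ νq e := by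
        intro e he
        have hmb : v + e ∈ Φ u := by
          have hz1 : ((u', v) : (Fin p → ℝ) × (Fin q → ℝ)) ∈ graphOf Φ := hu'
          have hz2 : ((xw, e) : (Fin p → ℝ) × (Fin q → ℝ)) ∈ graphOf Φ := he
          have hmid := hsub.2.1 hz1 hz2 (by norm_num : (0:ℝ) ≤ 1/2)
            (by norm_num : (0:ℝ) ≤ 1/2) (by norm_num : (1:ℝ)/2 + 1/2 = 1)
          have hsum := hsub.2.2 2 (by norm_num) _ hmid
          have hcalc : (2:ℝ) • ((1/2 : ℝ) • ((u', v) : (Fin p → ℝ) × (Fin q → ℝ))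
              + (1/2 : ℝ) • ((xw, e) : (Fin p → ℝ) × (Fin q → ℝ)))
              = ((u' + xw, v + e) : (Fin p → ℝ) × (Fin q → ℝ)) := by
            rw [smul_add, smul_smul, smul_smul]
            norm_num
          rw [hcalc] at hsum
          have huu : u' + xw = u := by rw [hxw]; abel
          rw [huu] at hsum
          exact hsum
        have hd := distWith_le (x := v) hνq hmb
        have hve : v - (v + e) = -e := by abel
        rw [hve, hνq.neg] at hd
        exact hd
      have hαg : α ≤ sInf (νq '' Φ xw) := by
        apply le_csInf (hxdom.image νq)
        rintro r ⟨e, he, rfl⟩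
        exact hαe e he
      have hg := hkey xw hxdom
      have hνpxw : νp xw ≤ β + ε := le_of_lt hr'
      calc α ≤ sInf (νq '' Φ xw) := hαg
        _ ≤ HR * νp xw := hg
        _ ≤ HR * (β + ε) := mul_le_mul_of_nonneg_left hνpxw hHRnn
    apply le_of_forall_pos_le_add
    intro ε' hε'
    have hHR1 : (0:ℝ) < HR + 1 := by linarith
    have hεp : 0 < ε' / (HR + 1) := div_pos hε' hHR1
    have h1 := hαle _ hεp
    have hle2 : HR * (ε' / (HR + 1)) ≤ ε' := by
      have heq : HR * (ε' / (HR + 1)) = (HR * ε') / (HR + 1) := by ring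
      rw [heq, div_le_iff₀ hHR1]
      nlinarith
    calc α ≤ HR * (β + ε' / (HR + 1)) := h1
      _ = HR * β + HR * (ε' / (HR + 1)) := by ring
      _ ≤ HR * β + ε' := by linarith
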